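/- arXiv:1612.06153 — 4 statements merged into one kernel-verified Lean document; each statement's English description precedes it below -/
import Mathlib

section
/- Let A and B be finite sets of real numbers. Then the set {2de : d ∈ A - A, e ∈ B - B} + {2de : d ∈ A - A, e ∈ B - B} is contained in 4·(A-B)² − 4·(A-B)², where (A-B)² = {(a-b)² : a ∈ A, b ∈ B} and k·X denotes the k-fold sumset X + ⋯ + X. -/
open Pointwise

theorem stmt_2 (A B : Finset ℝ) :
    (((A - A) * (B - B)).image (fun x => 2 * x) +
     ((A - A) * (B - B)).image (fun x => 2 * x)) ⊆
      (((A - B).image (fun d => d ^ 2) + (A - B).image (fun d => d ^ 2) +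
        (A - B).image (fun d => d ^ 2) + (A - B).image (fun d => d ^ 2)) -
       ((A - B).image (fun d => d ^ 2) + (A - B).image (fun d => d ^ 2) +
        (A - B).image (fun d => d ^ 2) + (A - B).image (fun d => d ^ 2))) := by
  intro x hx
  rw [Finset.mem_add] at hx
  obtain ⟨y, hy, z, hz, rfl⟩ := hx
  simp only [Finset.mem_image, Finset.mem_mul, Finset.mem_sub] at hy hz
  obtain ⟨_, ⟨_, ⟨a1, ha1, a1', ha1', rfl⟩, _, ⟨b1, hb1, b1', hb1', rfl⟩, rfl⟩, rfl⟩ := hy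
  obtain ⟨_, ⟨_, ⟨a2, ha2, a2', ha2', rfl⟩, _, ⟨b2, hb2, b2', hb2', rfl⟩, rfl⟩, rfl⟩ := hz
  have hQ : ∀ a b, a ∈ A → b ∈ B → (a - b) ^ 2 ∈ (A - B).image (fun d => d ^ 2) := by
    intro a b ha hb
    exact Finset.mem_image_of_mem _ (Finset.sub_mem_sub ha hb)
  have key : 2 * ((a1 - a1') * (b1 - b1')) + 2 * ((a2 - a2') * (b2 - b2')) =
      ((a1 - b1') ^ 2 + (a1' - b1) ^ 2 + (a2 - b2') ^ 2 + (a2' - b2) ^ 2) -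
      ((a1 - b1) ^ 2 + (a1' - b1') ^ 2 + (a2 - b2) ^ 2 + (a2' - b2') ^ 2) := by ring
  rw [key]
  exact Finset.sub_mem_sub
    (Finset.add_mem_add (Finset.add_mem_add (Finset.add_mem_add
      (hQ _ _ ha1 hb1') (hQ _ _ ha1' hb1)) (hQ _ _ ha2 hb2')) (hQ _ _ ha2' hb2))
    (Finset.add_mem_add (Finset.add_mem_add (Finset.add_mem_add
      (hQ _ _ ha1 hb1) (hQ _ _ ha1' hb1')) (hQ _ _ ha2 hb2)) (hQ _ _ ha2' hb2'))
end

section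
/- Let S ⊆ ℝ be a finite set with |S| ≥ 2. Then |S + S|² · |S·S| ≥ |S|⁴ / (4⌈log₂ |S|⌉). -/
open Pointwise Finset

namespace SolyAux

open scoped Classical

noncomputable section

def rep (S : Finset ℝ) (x : ℝ) : ℕ := ((S ×ˢ S).filter (fun p => p.1 * p.2 = x)).card
def Sp (S : Finset ℝ) : Finset ℝ := S.filter (fun a => a ≠ 0)
def Om (S : Finset ℝ) : Finset (ℝ × ℝ) := Sp S ×ˢ Sp S
def OmU (S : Finset ℝ) : Finset (ℝ × ℝ) := (Om S).filter (fun p => 0 < p.2)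
def OmD (S : Finset ℝ) : Finset (ℝ × ℝ) := (Om S).filter (fun p => p.2 < 0)
def tau (p : ℝ × ℝ) : ℝ := p.1 / p.2
def ptsU (S : Finset ℝ) (t : ℝ) : Finset (ℝ × ℝ) := (OmU S).filter (fun p => tau p = t)
def ptsD (S : Finset ℝ) (t : ℝ) : Finset (ℝ × ℝ) := (OmD S).filter (fun p => tau p = t)
def mU (S : Finset ℝ) (t : ℝ) : ℕ := (ptsU S t).card
def mD (S : Finset ℝ) (t : ℝ) : ℕ := (ptsD S t).card
def keysU (S : Finset ℝ) : Finset ℝ := (OmU S).image tau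
def keysD (S : Finset ℝ) : Finset ℝ := (OmD S).image tau
def rhoU (S : Finset ℝ) (x : ℝ) : ℕ := ((Om S).filter (fun p => p.1 * p.2 = x ∧ 0 < p.1)).card
def rhoD (S : Finset ℝ) (x : ℝ) : ℕ := ((Om S).filter (fun p => p.1 * p.2 = x ∧ p.1 < 0)).card

lemma mem_Sp {S : Finset ℝ} {a : ℝ} : a ∈ Sp S ↔ a ∈ S ∧ a ≠ 0 := by simp [Sp]

lemma mem_Om {S : Finset ℝ} {p : ℝ × ℝ} :
    p ∈ Om S ↔ (p.1 ∈ S ∧ p.1 ≠ 0) ∧ (p.2 ∈ S ∧ p.2 ≠ 0) := by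
  simp [Om, Finset.mem_product, mem_Sp]

lemma mem_OmU {S : Finset ℝ} {p : ℝ × ℝ} :
    p ∈ OmU S ↔ ((p.1 ∈ S ∧ p.1 ≠ 0) ∧ (p.2 ∈ S ∧ p.2 ≠ 0)) ∧ 0 < p.2 := by
  simp [OmU, Finset.mem_filter, mem_Om]

lemma mem_OmD {S : Finset ℝ} {p : ℝ × ℝ} :
    p ∈ OmD S ↔ ((p.1 ∈ S ∧ p.1 ≠ 0) ∧ (p.2 ∈ S ∧ p.2 ≠ 0)) ∧ p.2 < 0 := by
  simp [OmD, Finset.mem_filter, mem_Om]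

-- rep of zero
lemma rep_zero_le (S : Finset ℝ) (h0 : (0:ℝ) ∈ S) : rep S 0 + 1 ≤ 2 * S.card := by
  have hsub : ((S ×ˢ S).filter (fun p => p.1 * p.2 = 0)) ⊆
      ({(0:ℝ)} ×ˢ S) ∪ ((S.erase 0) ×ˢ {(0:ℝ)}) := by
    intro p hp
    simp only [Finset.mem_filter, Finset.mem_product] at hp
    obtain ⟨⟨h1, h2⟩, h3⟩ := hp
    by_cases h4 : p.1 = 0
    · exact Finset.mem_union_left _ (Finset.mem_product.mpr ⟨by simp [h4], h2⟩)
    · have h5 : p.2 = 0 := by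
        rcases mul_eq_zero.mp h3 with h | h
        · exact absurd h h4
        · exact h
      exact Finset.mem_union_right _
        (Finset.mem_product.mpr ⟨Finset.mem_erase.mpr ⟨h4, h1⟩, by simp [h5]⟩)
  have h1 := Finset.card_le_card hsub
  have h2 := Finset.card_union_le ({(0:ℝ)} ×ˢ S) ((S.erase 0) ×ˢ {(0:ℝ)})
  have h3 : ({(0:ℝ)} ×ˢ S).card = S.card := by simp
  have h4 : ((S.erase 0) ×ˢ ({(0:ℝ)} : Finset ℝ)).card = S.card - 1 := by
    rw [Finset.card_product, Finset.card_erase_of_mem h0]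
    simp
  have h5 : 1 ≤ S.card := Finset.card_pos.mpr ⟨0, h0⟩
  unfold rep
  omega

lemma rep_zero_eq_zero (S : Finset ℝ) (h0 : (0:ℝ) ∉ S) : rep S 0 = 0 := by
  unfold rep
  rw [Finset.card_eq_zero, Finset.filter_eq_empty_iff]
  intro p hp
  simp only [Finset.mem_product] at hp
  intro h
  rcases mul_eq_zero.mp h with h | h
  · exact h0 (h ▸ hp.1)
  · exact h0 (h ▸ hp.2)

-- split off zero from the energy
lemma energy_zero_split (S : Finset ℝ) (hn : 1 ≤ S.card) :
    ∑ x ∈ S * S, (rep S x : ℝ) ^ 2 ≤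
      (∑ x ∈ (S * S).erase 0, (rep S x : ℝ) ^ 2) + (2 * (S.card:ℝ) - 1) ^ 2 := by
  by_cases h0 : (0:ℝ) ∈ S * S
  · rw [← Finset.sum_erase_add (S*S) _ h0]
    have h0S : (0:ℝ) ∈ S := by
      rw [Finset.mem_mul] at h0
      obtain ⟨a, ha, b, hb, hab⟩ := h0
      rcases mul_eq_zero.mp hab with h | h
      · exact h ▸ ha
      · exact h ▸ hb
    have := rep_zero_le S h0S
    have hrep : (rep S 0 : ℝ) ≤ 2 * (S.card:ℝ) - 1 := by
      have : (rep S 0 : ℝ) + 1 ≤ 2 * (S.card : ℝ) := by exact_mod_cast this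
      linarith
    have h2 : (rep S 0 : ℝ) ^ 2 ≤ (2 * (S.card:ℝ) - 1) ^ 2 := by
      have hnn : (0:ℝ) ≤ (rep S 0 : ℝ) := Nat.cast_nonneg _
      nlinarith
    linarith
  · rw [Finset.erase_eq_of_notMem h0]
    have : (0:ℝ) ≤ (2 * (S.card:ℝ) - 1) ^ 2 := sq_nonneg _
    linarith

-- for x ≠ 0 : rep = rhoU + rhoD
lemma rep_eq_rho (S : Finset ℝ) (x : ℝ) (hx : x ≠ 0) : rep S x = rhoU S x + rhoD S x := by
  unfold rep rhoU rhoD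
  rw [← Finset.card_union_of_disjoint]
  · congr 1
    apply Finset.ext
    intro p
    simp only [Finset.mem_filter, Finset.mem_union, Finset.mem_product, mem_Om]
    constructor
    · rintro ⟨⟨h1, h2⟩, h3⟩
      have hp1 : p.1 ≠ 0 := fun h => hx (by rw [h, zero_mul] at h3; exact h3.symm)
      have hp2 : p.2 ≠ 0 := fun h => hx (by rw [h, mul_zero] at h3; exact h3.symm)
      rcases lt_or_gt_of_ne hp1 with h | h
      · right; exact ⟨⟨⟨h1, hp1⟩, h2, hp2⟩, h3, h⟩
      · left; exact ⟨⟨⟨h1, hp1⟩, h2, hp2⟩, h3, h⟩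
    · rintro (⟨⟨⟨h1, _⟩, h2, _⟩, h3, _⟩ | ⟨⟨⟨h1, _⟩, h2, _⟩, h3, _⟩) <;> exact ⟨⟨h1, h2⟩, h3⟩
  · rw [Finset.disjoint_filter]
    rintro p _ ⟨_, h1⟩ ⟨_, h2⟩
    exact absurd h1 (not_lt.mpr h2.le)

-- index set identification
lemma erase_zero_eq (S : Finset ℝ) : (S * S).erase 0 = Sp S * Sp S := by
  apply Finset.ext
  intro x
  simp only [Finset.mem_erase, Finset.mem_mul, mem_Sp]
  constructor
  · rintro ⟨hx, a, ha, b, hb, rfl⟩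
    have ha0 : a ≠ 0 := by rintro rfl; simp at hx
    have hb0 : b ≠ 0 := by rintro rfl; simp at hx
    exact ⟨a, ⟨ha, ha0⟩, b, ⟨hb, hb0⟩, rfl⟩
  · rintro ⟨a, ⟨ha, ha0⟩, b, ⟨hb, hb0⟩, rfl⟩
    exact ⟨mul_ne_zero ha0 hb0, a, ha, b, hb, rfl⟩

-- the same-ray relation sets
def Ru (S : Finset ℝ) : Finset ((ℝ × ℝ) × (ℝ × ℝ)) :=
  ((OmU S) ×ˢ (OmU S)).filter (fun pq => tau pq.1 = tau pq.2)
def Rd (S : Finset ℝ) : Finset ((ℝ × ℝ) × (ℝ × ℝ)) :=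
  ((OmD S) ×ˢ (OmD S)).filter (fun pq => tau pq.1 = tau pq.2)

lemma card_Ru_keys (S : Finset ℝ) : (Ru S).card = ∑ t ∈ keysU S, (mU S t) ^ 2 := by
  have hmap : ∀ pq ∈ Ru S, tau pq.1 ∈ keysU S := by
    intro pq hpq
    simp only [Ru, Finset.mem_filter, Finset.mem_product] at hpq
    exact Finset.mem_image_of_mem tau hpq.1.1
  rw [Finset.card_eq_sum_card_fiberwise hmap]
  apply Finset.sum_congr rfl
  intro t _
  have : (Ru S).filter (fun pq => tau pq.1 = t) = (ptsU S t) ×ˢ (ptsU S t) := by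
    apply Finset.ext
    intro pq
    simp only [Ru, ptsU, Finset.mem_filter, Finset.mem_product]
    constructor
    · rintro ⟨⟨⟨h1, h2⟩, h3⟩, h4⟩
      exact ⟨⟨h1, h4⟩, h2, h3 ▸ h4⟩
    · rintro ⟨⟨h1, h2⟩, h3, h4⟩
      exact ⟨⟨⟨h1, h3⟩, h2.trans h4.symm⟩, h2⟩
  rw [this, Finset.card_product, sq, mU]

lemma card_Rd_keys (S : Finset ℝ) : (Rd S).card = ∑ t ∈ keysD S, (mD S t) ^ 2 := by
  have hmap : ∀ pq ∈ Rd S, tau pq.1 ∈ keysD S := by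
    intro pq hpq
    simp only [Rd, Finset.mem_filter, Finset.mem_product] at hpq
    exact Finset.mem_image_of_mem tau hpq.1.1
  rw [Finset.card_eq_sum_card_fiberwise hmap]
  apply Finset.sum_congr rfl
  intro t _
  have : (Rd S).filter (fun pq => tau pq.1 = t) = (ptsD S t) ×ˢ (ptsD S t) := by
    apply Finset.ext
    intro pq
    simp only [Rd, ptsD, Finset.mem_filter, Finset.mem_product]
    constructor
    · rintro ⟨⟨⟨h1, h2⟩, h3⟩, h4⟩
      exact ⟨⟨h1, h4⟩, h2, h3 ▸ h4⟩
    · rintro ⟨⟨h1, h2⟩, h3, h4⟩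
      exact ⟨⟨⟨h1, h3⟩, h2.trans h4.symm⟩, h2⟩
  rw [this, Finset.card_product, sq, mD]

/-- sum of representation numbers -/
lemma sum_rep (S : Finset ℝ) : ∑ x ∈ S * S, rep S x = S.card ^ 2 := by
  have h : ∀ p ∈ S ×ˢ S, p.1 * p.2 ∈ S * S := by
    intro p hp
    rw [Finset.mem_product] at hp
    exact Finset.mul_mem_mul hp.1 hp.2
  have := Finset.card_eq_sum_card_fiberwise h
  rw [Finset.card_product] at this
  simp only [rep]
  rw [← this, sq]

/-- Cauchy–Schwarz -/
lemma cs (S : Finset ℝ) :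
    ((S.card : ℝ)) ^ 4 ≤ ((S * S).card : ℝ) * ∑ x ∈ S * S, (rep S x : ℝ) ^ 2 := by
  have h := Finset.sum_mul_sq_le_sq_mul_sq (S * S) (fun _ => (1 : ℝ)) (fun x => (rep S x : ℝ))
  simp only [one_mul, one_pow] at h
  have h1 : ∑ x ∈ S * S, (rep S x : ℝ) = (S.card : ℝ) ^ 2 := by
    rw [← Nat.cast_sum]
    norm_cast
    exact sum_rep S
  have h2 : (∑ _x ∈ S * S, (1 : ℝ)) = ((S * S).card : ℝ) := by
    simp
  rw [h1, h2] at h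
  calc ((S.card : ℝ)) ^ 4 = ((S.card : ℝ) ^ 2) ^ 2 := by ring
  _ ≤ ((S * S).card : ℝ) * ∑ x ∈ S * S, (rep S x : ℝ) ^ 2 := h



lemma sum_rhoU_sq (S : Finset ℝ) :
    ∑ x ∈ Sp S * Sp S, (rhoU S x) ^ 2 = (Ru S).card := by
  have hmap : ∀ pq ∈ Ru S, pq.1.2 * pq.2.1 ∈ Sp S * Sp S := by
    intro pq hpq
    simp only [Ru, Finset.mem_filter, Finset.mem_product] at hpq
    obtain ⟨⟨hp, hq⟩, _⟩ := hpq
    rw [mem_OmU] at hp hq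
    exact Finset.mul_mem_mul (mem_Sp.mpr hp.1.2) (mem_Sp.mpr hq.1.1)
  rw [Finset.card_eq_sum_card_fiberwise hmap]
  apply Finset.sum_congr rfl
  intro x _
  have key : ((Ru S).filter (fun pq => pq.1.2 * pq.2.1 = x)).card =
      (((Om S).filter (fun p => p.1 * p.2 = x ∧ 0 < p.1)) ×ˢ
       ((Om S).filter (fun p => p.1 * p.2 = x ∧ 0 < p.2))).card := by
    apply Finset.card_nbij' (fun pq => ((pq.1.2, pq.2.1), (pq.1.1, pq.2.2)))
      (fun ab => ((ab.2.1, ab.1.1), (ab.1.2, ab.2.2)))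
    · intro pq hpq
      simp only [Finset.mem_coe, Ru, Finset.mem_filter, Finset.mem_product] at hpq
      obtain ⟨⟨⟨hp, hq⟩, htau⟩, hx⟩ := hpq
      rw [mem_OmU] at hp hq
      obtain ⟨⟨⟨hp1S, hp1⟩, hp2S, hp2⟩, hp2pos⟩ := hp
      obtain ⟨⟨⟨hq1S, hq1⟩, hq2S, hq2⟩, hq2pos⟩ := hq
      have hcross : pq.1.1 * pq.2.2 = pq.1.2 * pq.2.1 := by
        have := (div_eq_div_iff hp2 hq2).mp htau
        linarith [this]
      simp only [Finset.mem_coe, Finset.mem_product, Finset.mem_filter, mem_Om]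
      refine ⟨⟨⟨⟨hp2S, hp2⟩, hq1S, hq1⟩, hx, hp2pos⟩,
              ⟨⟨⟨hp1S, hp1⟩, hq2S, hq2⟩, ?_, hq2pos⟩⟩
      rw [hcross]; exact hx
    · intro ab hab
      simp only [Finset.mem_coe, Finset.mem_product, Finset.mem_filter, mem_Om] at hab
      obtain ⟨⟨⟨⟨haS, ha⟩, hbS, hb⟩, habx, hapos⟩, ⟨⟨⟨hcS, hc⟩, hdS, hd⟩, hcdx, hdpos⟩⟩ := hab
      simp only [Finset.mem_coe, Ru, Finset.mem_filter, Finset.mem_product, mem_OmU]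
      refine ⟨⟨⟨?_, ?_⟩, ?_⟩, habx⟩
      · exact ⟨⟨⟨hcS, hc⟩, ⟨haS, ha⟩⟩, hapos⟩
      · exact ⟨⟨⟨hbS, hb⟩, ⟨hdS, hd⟩⟩, hdpos⟩
      show tau (ab.2.1, ab.1.1) = tau (ab.1.2, ab.2.2)
      simp only [tau]
      rw [div_eq_div_iff ha hd, hcdx, ← habx, mul_comm]
    · intro pq _; rfl
    · intro ab _; rfl
  rw [key, Finset.card_product]
  have hswap : (((Om S).filter (fun p => p.1 * p.2 = x ∧ 0 < p.2))).card = rhoU S x := by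
    apply Finset.card_nbij' Prod.swap Prod.swap
    · intro p hp
      simp only [Finset.mem_coe, Finset.mem_filter, mem_Om] at hp ⊢
      obtain ⟨⟨h1, h2⟩, h3, h4⟩ := hp
      exact ⟨⟨h2, h1⟩, by rw [mul_comm] at h3; exact h3, h4⟩
    · intro p hp
      simp only [Finset.mem_coe, rhoU, Finset.mem_filter, mem_Om] at hp
      simp only [Finset.mem_coe, Finset.mem_filter, mem_Om]
      obtain ⟨⟨h1, h2⟩, h3, h4⟩ := hp
      exact ⟨⟨h2, h1⟩, by rw [mul_comm] at h3; exact h3, h4⟩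
    · intro p _; rfl
    · intro p _; rfl
  rw [hswap, rhoU, sq]

lemma sum_rhoD_sq (S : Finset ℝ) :
    ∑ x ∈ Sp S * Sp S, (rhoD S x) ^ 2 = (Rd S).card := by
  have hmap : ∀ pq ∈ Rd S, pq.1.2 * pq.2.1 ∈ Sp S * Sp S := by
    intro pq hpq
    simp only [Rd, Finset.mem_filter, Finset.mem_product] at hpq
    obtain ⟨⟨hp, hq⟩, _⟩ := hpq
    rw [mem_OmD] at hp hq
    exact Finset.mul_mem_mul (mem_Sp.mpr hp.1.2) (mem_Sp.mpr hq.1.1)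
  rw [Finset.card_eq_sum_card_fiberwise hmap]
  apply Finset.sum_congr rfl
  intro x _
  have key : ((Rd S).filter (fun pq => pq.1.2 * pq.2.1 = x)).card =
      (((Om S).filter (fun p => p.1 * p.2 = x ∧ p.1 < 0)) ×ˢ
       ((Om S).filter (fun p => p.1 * p.2 = x ∧ p.2 < 0))).card := by
    apply Finset.card_nbij' (fun pq => ((pq.1.2, pq.2.1), (pq.1.1, pq.2.2)))
      (fun ab => ((ab.2.1, ab.1.1), (ab.1.2, ab.2.2)))
    · intro pq hpq
      simp only [Finset.mem_coe, Rd, Finset.mem_filter, Finset.mem_product] at hpq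
      obtain ⟨⟨⟨hp, hq⟩, htau⟩, hx⟩ := hpq
      rw [mem_OmD] at hp hq
      obtain ⟨⟨⟨hp1S, hp1⟩, hp2S, hp2⟩, hp2neg⟩ := hp
      obtain ⟨⟨⟨hq1S, hq1⟩, hq2S, hq2⟩, hq2neg⟩ := hq
      have hcross : pq.1.1 * pq.2.2 = pq.1.2 * pq.2.1 := by
        have := (div_eq_div_iff hp2 hq2).mp htau
        linarith [this]
      simp only [Finset.mem_coe, Finset.mem_product, Finset.mem_filter, mem_Om]
      refine ⟨⟨⟨⟨hp2S, hp2⟩, hq1S, hq1⟩, hx, hp2neg⟩,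
              ⟨⟨⟨hp1S, hp1⟩, hq2S, hq2⟩, ?_, hq2neg⟩⟩
      rw [hcross]; exact hx
    · intro ab hab
      simp only [Finset.mem_coe, Finset.mem_product, Finset.mem_filter, mem_Om] at hab
      obtain ⟨⟨⟨⟨haS, ha⟩, hbS, hb⟩, habx, haneg⟩, ⟨⟨⟨hcS, hc⟩, hdS, hd⟩, hcdx, hdneg⟩⟩ := hab
      simp only [Finset.mem_coe, Rd, Finset.mem_filter, Finset.mem_product, mem_OmD]
      refine ⟨⟨⟨?_, ?_⟩, ?_⟩, habx⟩
      · exact ⟨⟨⟨hcS, hc⟩, ⟨haS, ha⟩⟩, haneg⟩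
      · exact ⟨⟨⟨hbS, hb⟩, ⟨hdS, hd⟩⟩, hdneg⟩
      show tau (ab.2.1, ab.1.1) = tau (ab.1.2, ab.2.2)
      simp only [tau]
      rw [div_eq_div_iff ha hd, hcdx, ← habx, mul_comm]
    · intro pq _; rfl
    · intro ab _; rfl
  rw [key, Finset.card_product]
  have hswap : (((Om S).filter (fun p => p.1 * p.2 = x ∧ p.2 < 0))).card = rhoD S x := by
    apply Finset.card_nbij' Prod.swap Prod.swap
    · intro p hp
      simp only [Finset.mem_coe, Finset.mem_filter, mem_Om] at hp ⊢
      obtain ⟨⟨h1, h2⟩, h3, h4⟩ := hp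
      exact ⟨⟨h2, h1⟩, by rw [mul_comm] at h3; exact h3, h4⟩
    · intro p hp
      simp only [Finset.mem_coe, rhoD, Finset.mem_filter, mem_Om] at hp
      simp only [Finset.mem_coe, Finset.mem_filter, mem_Om]
      obtain ⟨⟨h1, h2⟩, h3, h4⟩ := hp
      exact ⟨⟨h2, h1⟩, by rw [mul_comm] at h3; exact h3, h4⟩
    · intro p _; rfl
    · intro p _; rfl
  rw [hswap, rhoD, sq]




lemma fst_eq_tau_mul {p : ℝ × ℝ} (hp : p.2 ≠ 0) : p.1 = tau p * p.2 := by
  unfold tau; rw [div_mul_cancel₀ _ hp]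

/-- the successor of `t` within the finite set `U` -/
def nxt (U : Finset ℝ) (t : ℝ) : ℝ :=
  if h : ((U.filter (fun u => t < u)).Nonempty) then (U.filter (fun u => t < u)).min' h else 0

lemma nxt_spec {U : Finset ℝ} {t : ℝ} (hex : ∃ u ∈ U, t < u) :
    nxt U t ∈ U ∧ t < nxt U t ∧ ∀ v ∈ U, t < v → nxt U t ≤ v := by
  obtain ⟨u, hu, htu⟩ := hex
  have hne : ((U.filter (fun u => t < u)).Nonempty) := ⟨u, Finset.mem_filter.mpr ⟨hu, htu⟩⟩
  rw [nxt, dif_pos hne]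
  have hmem := (U.filter (fun u => t < u)).min'_mem hne
  rw [Finset.mem_filter] at hmem
  refine ⟨hmem.1, hmem.2, ?_⟩
  intro v hv htv
  exact Finset.min'_le _ _ (Finset.mem_filter.mpr ⟨hv, htv⟩)

/-- consecutive-pair point sets, upper half plane -/
def BU (S : Finset ℝ) (U : Finset ℝ) : Finset ((ℝ × ℝ) × (ℝ × ℝ)) :=
  ((OmU S) ×ˢ (OmU S)).filter
    (fun pq => tau pq.1 ∈ U ∧ (∃ u ∈ U, tau pq.1 < u) ∧ tau pq.2 = nxt U (tau pq.1))

def BD (S : Finset ℝ) (D : Finset ℝ) : Finset ((ℝ × ℝ) × (ℝ × ℝ)) :=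
  ((OmD S) ×ˢ (OmD S)).filter
    (fun pq => tau pq.1 ∈ D ∧ (∃ u ∈ D, tau pq.1 < u) ∧ tau pq.2 = nxt D (tau pq.1))

lemma tau_between_up {p q : ℝ × ℝ} (hp : 0 < p.2) (hq : 0 < q.2) (hlt : tau p < tau q) :
    tau p < tau (p.1 + q.1, p.2 + q.2) ∧ tau (p.1 + q.1, p.2 + q.2) < tau q := by
  have hv : 0 < p.2 + q.2 := by linarith
  have hp1 : p.1 = tau p * p.2 := fst_eq_tau_mul hp.ne'
  have hq1 : q.1 = tau q * q.2 := fst_eq_tau_mul hq.ne'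
  constructor
  · show tau p < (p.1 + q.1) / (p.2 + q.2)
    rw [lt_div_iff₀ hv]
    nlinarith [mul_lt_mul_of_pos_right hlt hq]
  · show (p.1 + q.1) / (p.2 + q.2) < tau q
    rw [div_lt_iff₀ hv]
    nlinarith [mul_lt_mul_of_pos_right hlt hp]

lemma tau_between_down {p q : ℝ × ℝ} (hp : p.2 < 0) (hq : q.2 < 0) (hlt : tau p < tau q) :
    tau p < tau (p.1 + q.1, p.2 + q.2) ∧ tau (p.1 + q.1, p.2 + q.2) < tau q := by
  have hv : p.2 + q.2 < 0 := by linarith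
  have hp1 : p.1 = tau p * p.2 := fst_eq_tau_mul hp.ne
  have hq1 : q.1 = tau q * q.2 := fst_eq_tau_mul hq.ne
  constructor
  · show tau p < (p.1 + q.1) / (p.2 + q.2)
    rw [lt_div_iff_of_neg hv]
    nlinarith [mul_lt_mul_of_neg_right hlt hq]
  · show (p.1 + q.1) / (p.2 + q.2) < tau q
    rw [div_lt_iff_of_neg hv]
    nlinarith [mul_lt_mul_of_neg_right hlt hp]

/-- facts from membership in BU -/
lemma BU_facts {S U : Finset ℝ} {pq : (ℝ × ℝ) × (ℝ × ℝ)} (h : pq ∈ BU S U) :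
    pq.1 ∈ OmU S ∧ pq.2 ∈ OmU S ∧ tau pq.1 ∈ U ∧ tau pq.1 < tau pq.2 ∧
      (∀ v ∈ U, tau pq.1 < v → tau pq.2 ≤ v) ∧ tau pq.2 = nxt U (tau pq.1) := by
  simp only [BU, Finset.mem_filter, Finset.mem_product] at h
  obtain ⟨⟨h1, h2⟩, h3, hex, h4⟩ := h
  obtain ⟨hmem, hlt, hmin⟩ := nxt_spec hex
  rw [← h4] at hlt hmin
  exact ⟨h1, h2, h3, hlt, hmin, h4⟩

lemma BD_facts {S D : Finset ℝ} {pq : (ℝ × ℝ) × (ℝ × ℝ)} (h : pq ∈ BD S D) :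
    pq.1 ∈ OmD S ∧ pq.2 ∈ OmD S ∧ tau pq.1 ∈ D ∧ tau pq.1 < tau pq.2 ∧
      (∀ v ∈ D, tau pq.1 < v → tau pq.2 ≤ v) ∧ tau pq.2 = nxt D (tau pq.1) := by
  simp only [BD, Finset.mem_filter, Finset.mem_product] at h
  obtain ⟨⟨h1, h2⟩, h3, hex, h4⟩ := h
  obtain ⟨hmem, hlt, hmin⟩ := nxt_spec hex
  rw [← h4] at hlt hmin
  exact ⟨h1, h2, h3, hlt, hmin, h4⟩

/-- two pairs of points on the same ordered pair of rays with the same vector sum agree -/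
lemma same_rays_eq {p q p' q' : ℝ × ℝ} (hp2 : p.2 ≠ 0) (hq2 : q.2 ≠ 0)
    (ht : tau p = tau p') (ht' : tau q = tau q') (hne : tau p ≠ tau q)
    (hp2' : p'.2 ≠ 0) (hq2' : q'.2 ≠ 0)
    (e1 : p.1 + q.1 = p'.1 + q'.1) (e2 : p.2 + q.2 = p'.2 + q'.2) :
    p = p' ∧ q = q' := by
  have hp1 : p.1 = tau p * p.2 := fst_eq_tau_mul hp2
  have hq1 : q.1 = tau q * q.2 := fst_eq_tau_mul hq2
  have hp1' : p'.1 = tau p * p'.2 := by rw [ht]; exact fst_eq_tau_mul hp2'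
  have hq1' : q'.1 = tau q * q'.2 := by rw [ht']; exact fst_eq_tau_mul hq2'
  have key : (tau q - tau p) * (q.2 - q'.2) = 0 := by
    rw [hp1, hq1, hp1', hq1'] at e1
    linear_combination e1 - tau p * e2
  have hq2eq : q.2 = q'.2 := by
    rcases mul_eq_zero.mp key with h | h
    · exact absurd (by linarith : tau q = tau p) (Ne.symm hne)
    · linarith
  have hp2eq : p.2 = p'.2 := by linarith
  constructor
  · exact Prod.ext (by rw [hp1, hp1', hp2eq]) hp2eq
  · exact Prod.ext (by rw [hq1, hq1', hq2eq]) hq2eq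

/-- The key geometric injection: consecutive-ray pair sums are distinct. -/
lemma card_BU_add_BD_le (S : Finset ℝ) (U D : Finset ℝ) :
    (BU S U).card + (BD S D).card ≤ ((S + S) ×ˢ (S + S)).card := by
  have hdisj : Disjoint (BU S U) (BD S D) := by
    rw [Finset.disjoint_left]
    intro pq hu hd
    have h1 := (BU_facts hu).1
    have h2 := (BD_facts hd).1
    rw [mem_OmU] at h1; rw [mem_OmD] at h2
    linarith [h1.2, h2.2]
  rw [← Finset.card_union_of_disjoint hdisj]
  apply Finset.card_le_card_of_injOn (fun pq => (pq.1.1 + pq.2.1, pq.1.2 + pq.2.2))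
  · intro pq hpq
    rw [Finset.mem_coe, Finset.mem_union] at hpq
    have hmem : pq.1 ∈ Om S ∧ pq.2 ∈ Om S := by
      rcases hpq with h | h
      · have := BU_facts h
        exact ⟨Finset.mem_of_mem_filter _ this.1, Finset.mem_of_mem_filter _ this.2.1⟩
      · have := BD_facts h
        exact ⟨Finset.mem_of_mem_filter _ this.1, Finset.mem_of_mem_filter _ this.2.1⟩
    obtain ⟨h1, h2⟩ := hmem
    rw [mem_Om] at h1 h2
    exact Finset.mem_product.mpr
      ⟨Finset.add_mem_add h1.1.1 h2.1.1, Finset.add_mem_add h1.2.1 h2.2.1⟩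
  · intro a ha b hb heq
    simp only [Finset.coe_union, Set.mem_union, Finset.mem_coe] at ha hb
    have e1 : a.1.1 + a.2.1 = b.1.1 + b.2.1 := congrArg Prod.fst heq
    have e2 : a.1.2 + a.2.2 = b.1.2 + b.2.2 := congrArg Prod.snd heq
    -- helper to finish the same-halfplane same-class case
    rcases ha with ha | ha <;> rcases hb with hb | hb
    · -- both up
      obtain ⟨hap, haq, haU, halt, hamin, hanxt⟩ := BU_facts ha
      obtain ⟨hbp, hbq, hbU, hblt, hbmin, hbnxt⟩ := BU_facts hb
      rw [mem_OmU] at hap haq hbp hbq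
      by_cases htt : tau a.1 = tau b.1
      · have htq : tau a.2 = tau b.2 := by rw [hanxt, hbnxt, htt]
        obtain ⟨h1, h2⟩ := same_rays_eq hap.2.ne' haq.2.ne' htt htq (ne_of_lt halt)
          hbp.2.ne' hbq.2.ne' e1 e2
        exact Prod.ext h1 h2
      · exfalso
        have hba := tau_between_up hap.2 haq.2 halt
        have hbb := tau_between_up hbp.2 hbq.2 hblt
        rw [e1, e2] at hba
        rcases lt_or_gt_of_ne htt with h | h
        · have := hamin _ hbU h
          linarith [hba.2, hbb.1]
        · have := hbmin _ haU h
          linarith [hba.1, hbb.2]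
    · -- up / down : impossible
      exfalso
      obtain ⟨hap, haq, _, _, _, _⟩ := BU_facts ha
      obtain ⟨hbp, hbq, _, _, _, _⟩ := BD_facts hb
      rw [mem_OmU] at hap haq; rw [mem_OmD] at hbp hbq
      linarith [hap.2, haq.2, hbp.2, hbq.2, e2]
    · exfalso
      obtain ⟨hap, haq, _, _, _, _⟩ := BD_facts ha
      obtain ⟨hbp, hbq, _, _, _, _⟩ := BU_facts hb
      rw [mem_OmD] at hap haq; rw [mem_OmU] at hbp hbq
      linarith [hap.2, haq.2, hbp.2, hbq.2, e2]
    · -- both down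
      obtain ⟨hap, haq, haU, halt, hamin, hanxt⟩ := BD_facts ha
      obtain ⟨hbp, hbq, hbU, hblt, hbmin, hbnxt⟩ := BD_facts hb
      rw [mem_OmD] at hap haq hbp hbq
      by_cases htt : tau a.1 = tau b.1
      · have htq : tau a.2 = tau b.2 := by rw [hanxt, hbnxt, htt]
        obtain ⟨h1, h2⟩ := same_rays_eq hap.2.ne haq.2.ne htt htq (ne_of_lt halt)
          hbp.2.ne hbq.2.ne e1 e2
        exact Prod.ext h1 h2
      · exfalso
        have hba := tau_between_down hap.2 haq.2 halt
        have hbb := tau_between_down hbp.2 hbq.2 hblt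
        rw [e1, e2] at hba
        rcases lt_or_gt_of_ne htt with h | h
        · have := hamin _ hbU h
          linarith [hba.2, hbb.1]
        · have := hbmin _ haU h
          linarith [hba.1, hbb.2]



/-! ### counting for consecutive-pair sets -/

def nextable (U : Finset ℝ) : Finset ℝ := U.filter (fun t => ∃ u ∈ U, t < u)

lemma card_BU_eq (S : Finset ℝ) (U : Finset ℝ) :
    (BU S U).card = ∑ t ∈ nextable U, mU S t * mU S (nxt U t) := by
  have hmap : ∀ pq ∈ BU S U, tau pq.1 ∈ nextable U := by
    intro pq hpq
    simp only [BU, Finset.mem_filter, Finset.mem_product] at hpq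
    exact Finset.mem_filter.mpr ⟨hpq.2.1, hpq.2.2.1⟩
  rw [Finset.card_eq_sum_card_fiberwise hmap]
  apply Finset.sum_congr rfl
  intro t ht
  rw [nextable, Finset.mem_filter] at ht
  have : (BU S U).filter (fun pq => tau pq.1 = t) = (ptsU S t) ×ˢ (ptsU S (nxt U t)) := by
    apply Finset.ext
    intro pq
    simp only [BU, ptsU, Finset.mem_filter, Finset.mem_product]
    constructor
    · rintro ⟨⟨⟨h1, h2⟩, _, _, h5⟩, h6⟩
      exact ⟨⟨h1, h6⟩, h2, h6 ▸ h5⟩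
    · rintro ⟨⟨h1, h2⟩, h3, h4⟩
      exact ⟨⟨⟨h1, h3⟩, h2 ▸ ht.1, h2 ▸ ht.2, h2 ▸ h4⟩, h2⟩
  rw [this, Finset.card_product, mU, mU]

lemma card_BD_eq (S : Finset ℝ) (D : Finset ℝ) :
    (BD S D).card = ∑ t ∈ nextable D, mD S t * mD S (nxt D t) := by
  have hmap : ∀ pq ∈ BD S D, tau pq.1 ∈ nextable D := by
    intro pq hpq
    simp only [BD, Finset.mem_filter, Finset.mem_product] at hpq
    exact Finset.mem_filter.mpr ⟨hpq.2.1, hpq.2.2.1⟩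
  rw [Finset.card_eq_sum_card_fiberwise hmap]
  apply Finset.sum_congr rfl
  intro t ht
  rw [nextable, Finset.mem_filter] at ht
  have : (BD S D).filter (fun pq => tau pq.1 = t) = (ptsD S t) ×ˢ (ptsD S (nxt D t)) := by
    apply Finset.ext
    intro pq
    simp only [BD, ptsD, Finset.mem_filter, Finset.mem_product]
    constructor
    · rintro ⟨⟨⟨h1, h2⟩, _, _, h5⟩, h6⟩
      exact ⟨⟨h1, h6⟩, h2, h6 ▸ h5⟩
    · rintro ⟨⟨h1, h2⟩, h3, h4⟩
      exact ⟨⟨⟨h1, h3⟩, h2 ▸ ht.1, h2 ▸ ht.2, h2 ▸ h4⟩, h2⟩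
  rw [this, Finset.card_product, mD, mD]

lemma compl_nextable_card (U : Finset ℝ) : (U \ nextable U).card ≤ 1 := by
  rw [Finset.card_le_one]
  intro a ha b hb
  rw [Finset.mem_sdiff, nextable, Finset.mem_filter] at ha hb
  have h1 : ¬ (a < b) := fun h => ha.2 ⟨ha.1, ⟨b, hb.1, h⟩⟩
  have h2 : ¬ (b < a) := fun h => hb.2 ⟨hb.1, ⟨a, ha.1, h⟩⟩
  linarith [lt_or_ge a b, lt_or_ge b a]

/-- the positive ray masses -/
lemma mU_pos {S : Finset ℝ} {t : ℝ} (ht : t ∈ keysU S) : 0 < mU S t := by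
  rw [keysU, Finset.mem_image] at ht
  obtain ⟨p, hp, hpt⟩ := ht
  exact Finset.card_pos.mpr ⟨p, Finset.mem_filter.mpr ⟨hp, hpt⟩⟩

lemma mD_pos {S : Finset ℝ} {t : ℝ} (ht : t ∈ keysD S) : 0 < mD S t := by
  rw [keysD, Finset.mem_image] at ht
  obtain ⟨p, hp, hpt⟩ := ht
  exact Finset.card_pos.mpr ⟨p, Finset.mem_filter.mpr ⟨hp, hpt⟩⟩

/-- ray masses are bounded by the positive part -/
lemma mU_le_P (S : Finset ℝ) (t : ℝ) : mU S t ≤ (S.filter (fun a => 0 < a)).card := by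
  apply Finset.card_le_card_of_injOn (fun p => p.2)
  · intro p hp
    rw [Finset.mem_coe, ptsU, Finset.mem_filter, mem_OmU] at hp
    exact Finset.mem_filter.mpr ⟨hp.1.1.2.1, hp.1.2⟩
  · intro p hp q hq hpq
    rw [Finset.mem_coe, ptsU, Finset.mem_filter, mem_OmU] at hp hq
    have h1 : p.1 = tau p * p.2 := fst_eq_tau_mul hp.1.1.2.2
    have h2 : q.1 = tau q * q.2 := fst_eq_tau_mul hq.1.1.2.2
    apply Prod.ext
    · simp only at hpq
      rw [h1, h2, hp.2, hq.2, hpq]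
    · exact hpq

lemma mD_le_N (S : Finset ℝ) (t : ℝ) : mD S t ≤ (S.filter (fun a => a < 0)).card := by
  apply Finset.card_le_card_of_injOn (fun p => p.2)
  · intro p hp
    rw [Finset.mem_coe, ptsD, Finset.mem_filter, mem_OmD] at hp
    exact Finset.mem_filter.mpr ⟨hp.1.1.2.1, hp.1.2⟩
  · intro p hp q hq hpq
    rw [Finset.mem_coe, ptsD, Finset.mem_filter, mem_OmD] at hp hq
    have h1 : p.1 = tau p * p.2 := fst_eq_tau_mul hp.1.1.2.2
    have h2 : q.1 = tau q * q.2 := fst_eq_tau_mul hq.1.1.2.2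
    apply Prod.ext
    · simp only at hpq
      rw [h1, h2, hp.2, hq.2, hpq]
    · exact hpq

lemma P_le_Sp (S : Finset ℝ) : (S.filter (fun a => 0 < a)).card ≤ (Sp S).card := by
  apply Finset.card_le_card
  intro a ha
  rw [Finset.mem_filter] at ha
  exact mem_Sp.mpr ⟨ha.1, ne_of_gt ha.2⟩

lemma N_le_Sp (S : Finset ℝ) : (S.filter (fun a => a < 0)).card ≤ (Sp S).card := by
  apply Finset.card_le_card
  intro a ha
  rw [Finset.mem_filter] at ha
  exact mem_Sp.mpr ⟨ha.1, ne_of_lt ha.2⟩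

lemma P_add_N (S : Finset ℝ) :
    (S.filter (fun a => 0 < a)).card + (S.filter (fun a => a < 0)).card = (Sp S).card := by
  rw [← Finset.card_union_of_disjoint]
  · congr 1
    apply Finset.ext
    intro a
    simp only [Finset.mem_union, Finset.mem_filter, mem_Sp]
    constructor
    · rintro (⟨h1, h2⟩ | ⟨h1, h2⟩)
      · exact ⟨h1, ne_of_gt h2⟩
      · exact ⟨h1, ne_of_lt h2⟩
    · rintro ⟨h1, h2⟩
      rcases lt_or_gt_of_ne h2 with h | h
      · right; exact ⟨h1, h⟩
      · left; exact ⟨h1, h⟩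
  · rw [Finset.disjoint_filter]
    intro a _ h1 h2
    linarith

/-- total masses -/
lemma sum_mU (S : Finset ℝ) : ∑ t ∈ keysU S, mU S t = (OmU S).card := by
  rw [Finset.card_eq_sum_card_fiberwise
    (fun p (hp : p ∈ OmU S) => Finset.mem_image_of_mem tau hp)]
  rfl

lemma sum_mD (S : Finset ℝ) : ∑ t ∈ keysD S, mD S t = (OmD S).card := by
  rw [Finset.card_eq_sum_card_fiberwise
    (fun p (hp : p ∈ OmD S) => Finset.mem_image_of_mem tau hp)]
  rfl

lemma OmU_add_OmD (S : Finset ℝ) : (OmU S).card + (OmD S).card = (Sp S).card ^ 2 := by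
  have : (OmU S).card + (OmD S).card = ((OmU S) ∪ (OmD S)).card := by
    rw [Finset.card_union_of_disjoint]
    rw [Finset.disjoint_left]
    intro p hp hq
    rw [mem_OmU] at hp; rw [mem_OmD] at hq
    linarith [hp.2, hq.2]
  rw [this]
  have huni : (OmU S) ∪ (OmD S) = Om S := by
    apply Finset.ext
    intro p
    simp only [Finset.mem_union, mem_OmU, mem_OmD, mem_Om]
    constructor
    · rintro (⟨h, _⟩ | ⟨h, _⟩) <;> exact h
    · intro h
      rcases lt_or_gt_of_ne h.2.2 with hl | hl
      · right; exact ⟨h, hl⟩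
      · left; exact ⟨h, hl⟩
  rw [huni, Om, Finset.card_product, sq]


/-! ### dyadic levels -/

def lvlU (S : Finset ℝ) (j : ℕ) : Finset ℝ :=
  (keysU S).filter (fun t => Nat.log 2 (mU S t) = j)
def lvlD (S : Finset ℝ) (j : ℕ) : Finset ℝ :=
  (keysD S).filter (fun t => Nat.log 2 (mD S t) = j)

lemma lvlU_spec {S : Finset ℝ} {j : ℕ} {t : ℝ} (ht : t ∈ lvlU S j) :
    2 ^ j ≤ mU S t ∧ mU S t < 2 ^ (j + 1) := by
  rw [lvlU, Finset.mem_filter] at ht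
  have hpos := mU_pos ht.1
  constructor
  · rw [← ht.2]; exact Nat.pow_log_le_self 2 hpos.ne'
  · rw [← ht.2]; exact Nat.lt_pow_succ_log_self (by norm_num) _

lemma lvlD_spec {S : Finset ℝ} {j : ℕ} {t : ℝ} (ht : t ∈ lvlD S j) :
    2 ^ j ≤ mD S t ∧ mD S t < 2 ^ (j + 1) := by
  rw [lvlD, Finset.mem_filter] at ht
  have hpos := mD_pos ht.1
  constructor
  · rw [← ht.2]; exact Nat.pow_log_le_self 2 hpos.ne'
  · rw [← ht.2]; exact Nat.lt_pow_succ_log_self (by norm_num) _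

/-- partition of the keys into levels -/
lemma sum_lvlU (S : Finset ℝ) (J : ℕ) (F : ℝ → ℕ)
    (hJ : ∀ t ∈ keysU S, mU S t < 2 ^ J) :
    ∑ j ∈ Finset.range J, ∑ t ∈ lvlU S j, F t = ∑ t ∈ keysU S, F t := by
  apply Finset.sum_fiberwise_of_maps_to
  intro t ht
  rw [Finset.mem_range]
  exact Nat.log_lt_of_lt_pow (mU_pos ht).ne' (hJ t ht)

lemma sum_lvlD (S : Finset ℝ) (J : ℕ) (F : ℝ → ℕ)
    (hJ : ∀ t ∈ keysD S, mD S t < 2 ^ J) :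
    ∑ j ∈ Finset.range J, ∑ t ∈ lvlD S j, F t = ∑ t ∈ keysD S, F t := by
  apply Finset.sum_fiberwise_of_maps_to
  intro t ht
  rw [Finset.mem_range]
  exact Nat.log_lt_of_lt_pow (mD_pos ht).ne' (hJ t ht)

/-! ### per-level inequalities (natural numbers) -/

/-- squares bounded by twice consecutive products plus the top term -/
lemma level_sq_bound (T : Finset ℝ) (f : ℝ → ℕ) (j : ℕ)
    (hlow : ∀ t ∈ T, 2 ^ j ≤ f t) (hhigh : ∀ t ∈ T, f t < 2 ^ (j + 1)) :
    ∑ t ∈ T, f t ^ 2 ≤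
      2 * (∑ t ∈ nextable T, f t * f (nxt T t)) + ∑ t ∈ T \ nextable T, f t ^ 2 := by
  have hsub : nextable T ⊆ T := Finset.filter_subset _ _
  have hsplit : ∑ t ∈ T, f t ^ 2 =
      ∑ t ∈ nextable T, f t ^ 2 + ∑ t ∈ T \ nextable T, f t ^ 2 := by
    rw [add_comm, Finset.sum_sdiff hsub]
  rw [hsplit]
  have hmain : ∑ t ∈ nextable T, f t ^ 2 ≤ 2 * ∑ t ∈ nextable T, f t * f (nxt T t) := by
    rw [Finset.mul_sum]
    apply Finset.sum_le_sum
    intro t ht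
    rw [nextable, Finset.mem_filter] at ht
    obtain ⟨hnmem, hngt, _⟩ := nxt_spec ht.2
    have h1 : f t < 2 * f (nxt T t) := by
      calc f t < 2 ^ (j + 1) := hhigh t ht.1
      _ = 2 * 2 ^ j := by ring
      _ ≤ 2 * f (nxt T t) := by
          exact Nat.mul_le_mul_left 2 (hlow _ hnmem)
    calc f t ^ 2 = f t * f t := sq (f t)
    _ ≤ f t * (2 * f (nxt T t)) := Nat.mul_le_mul_left _ h1.le
    _ = 2 * (f t * f (nxt T t)) := by ring
  omega

/-- the leftover term is at most one element -/
lemma leftover_bound (T : Finset ℝ) (f : ℝ → ℕ) (j K : ℕ)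
    (hhigh : ∀ t ∈ T, f t < 2 ^ (j + 1)) (hK : ∀ t ∈ T, f t ≤ K) :
    ∑ t ∈ T \ nextable T, f t ^ 2 ≤ min (4 ^ (j + 1)) (K ^ 2) := by
  have hcard := compl_nextable_card T
  rcases Finset.card_le_one.mp hcard with h
  by_cases hne : (T \ nextable T).Nonempty
  · obtain ⟨t0, ht0⟩ := hne
    have : T \ nextable T = {t0} := by
      apply Finset.eq_singleton_iff_unique_mem.mpr
      exact ⟨ht0, fun x hx => h x hx t0 ht0⟩
    rw [this, Finset.sum_singleton]
    have htT : t0 ∈ T := (Finset.mem_sdiff.mp ht0).1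
    apply le_min
    · have h1 : f t0 ≤ 2 ^ (j + 1) := (hhigh t0 htT).le
      calc f t0 ^ 2 ≤ (2 ^ (j+1)) ^ 2 := Nat.pow_le_pow_left h1 2
      _ = 4 ^ (j + 1) := by rw [← Nat.pow_mul, Nat.mul_comm (j+1) 2, Nat.pow_mul]
    · exact Nat.pow_le_pow_left (hK t0 htT) 2
  · rw [Finset.not_nonempty_iff_eq_empty.mp hne, Finset.sum_empty]
    exact Nat.zero_le _

/-- consecutive products bounded via the mass -/
lemma good_le_mass (T : Finset ℝ) (f : ℝ → ℕ) (j : ℕ)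
    (hhigh : ∀ t ∈ T, f t < 2 ^ (j + 1)) :
    ∑ t ∈ nextable T, f t * f (nxt T t) ≤ 2 ^ (j + 1) * ∑ t ∈ T, f t := by
  calc ∑ t ∈ nextable T, f t * f (nxt T t)
      ≤ ∑ t ∈ nextable T, f t * 2 ^ (j + 1) := by
        apply Finset.sum_le_sum
        intro t ht
        rw [nextable, Finset.mem_filter] at ht
        obtain ⟨hnmem, _, _⟩ := nxt_spec ht.2
        exact Nat.mul_le_mul_left _ (hhigh _ hnmem).le
  _ = 2 ^ (j + 1) * ∑ t ∈ nextable T, f t := by rw [← Finset.sum_mul, Nat.mul_comm]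
  _ ≤ 2 ^ (j + 1) * ∑ t ∈ T, f t := by
      apply Nat.mul_le_mul_left
      apply Finset.sum_le_sum_of_subset_of_nonneg (Finset.filter_subset _ _)
      intro i _ _
      exact Nat.zero_le _


/-! ### real combination lemmas -/

lemma combine_min (g W mass : ℝ) (j : ℕ) (hg1 : g ≤ W) (hg2 : g ≤ 2^(j+1) * mass)
    (hm : 0 ≤ mass) : g ≤ W - W / 2^j + 2 * mass := by
  have hp : (0:ℝ) < 2^j := by positivity
  have hp1 : (1:ℝ) ≤ 2^j := one_le_pow₀ (by norm_num : (1:ℝ) ≤ 2)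
  by_cases hc : 2^(j+1) * mass ≤ W
  · have h2m : 2*mass ≤ W/2^j := by
      rw [le_div_iff₀ hp]
      calc 2*mass*2^j = 2^(j+1)*mass := by rw [pow_succ]; ring
      _ ≤ W := hc
    have key : 0 ≤ (W/2^j - 2*mass) * (2^j - 1) :=
      mul_nonneg (sub_nonneg.mpr h2m) (sub_nonneg.mpr hp1)
    have hWW : W/2^j * 2^j = W := div_mul_cancel₀ W hp.ne'
    have hg2' : g ≤ 2*2^j*mass := by
      calc g ≤ 2^(j+1)*mass := hg2
      _ = 2*2^j*mass := by rw [pow_succ]; ring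
    nlinarith [key, hWW, hg2']
  · push_neg at hc
    have : W/2^j ≤ 2*mass := by
      rw [div_le_iff₀ hp]
      calc W ≤ 2^(j+1)*mass := hc.le
      _ = 2*mass*2^j := by rw [pow_succ]; ring
    linarith
  
lemma sumW (W : ℝ) (J : ℕ) (hW : 0 ≤ W) (hJ : 4 ≤ J) :
    ∑ j ∈ Finset.range J, (W - W / 2^j) ≤ J*W - (15/8)*W := by
  rw [Finset.sum_sub_distrib, Finset.sum_const, Finset.card_range, nsmul_eq_mul]
  have h1 : ∑ j ∈ Finset.range 4, W / 2^j ≤ ∑ j ∈ Finset.range J, W / 2^j := by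
    apply Finset.sum_le_sum_of_subset_of_nonneg
    · exact Finset.range_subset_range.mpr hJ
    · intro i _ _; positivity
  have h2 : ∑ j ∈ Finset.range 4, W / 2^j = (15/8)*W := by
    simp [Finset.sum_range_succ]
    ring
  linarith

lemma geo4 (a : ℕ) : 3 * (∑ j ∈ Finset.range a, 4^(j+1)) + 4 = 4^(a+1) := by
  induction a with
  | zero => simp
  | succ a ih =>
    rw [Finset.sum_range_succ]
    have hstep : (4:ℕ)^(a+1+1) = 4*4^(a+1) := by rw [pow_succ]; ring
    omega

lemma osSum (J c K : ℕ) (hK : 1 ≤ K) (hJc : 2^J ≤ 2^c * K) :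
    3 * (∑ j ∈ Finset.range J, min (4^(j+1)) (K^2)) ≤ 4*K^2 + 3*c*K^2 := by
  set a := Nat.log 2 K with ha
  have hsplit := Finset.sum_filter_add_sum_filter_not (Finset.range J)
    (fun j => j < a) (fun j => min (4^(j+1)) (K^2))
  have hb1 : ∑ j ∈ (Finset.range J).filter (fun j => j < a), min (4^(j+1)) (K^2)
      ≤ ∑ j ∈ Finset.range a, 4^(j+1) := by
    calc ∑ j ∈ (Finset.range J).filter (fun j => j < a), min (4^(j+1)) (K^2)
        ≤ ∑ j ∈ (Finset.range J).filter (fun j => j < a), 4^(j+1) :=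
          Finset.sum_le_sum (fun j _ => min_le_left _ _)
    _ ≤ ∑ j ∈ Finset.range a, 4^(j+1) := by
        apply Finset.sum_le_sum_of_subset_of_nonneg
        · intro j hj
          rw [Finset.mem_filter] at hj
          exact Finset.mem_range.mpr hj.2
        · intro i _ _; exact Nat.zero_le _
  have hgeo : 3 * ∑ j ∈ Finset.range a, 4^(j+1) ≤ 4 * K^2 := by
    have := geo4 a
    have h4a : (4:ℕ)^a ≤ K^2 := by
      have h2a : 2^a ≤ K := Nat.pow_log_le_self 2 (by omega)
      calc (4:ℕ)^a = (2^a)^2 := by rw [← Nat.pow_mul, Nat.mul_comm, Nat.pow_mul]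
      _ ≤ K^2 := Nat.pow_le_pow_left h2a 2
    have : 3 * ∑ j ∈ Finset.range a, 4^(j+1) + 4 = 4 * 4^a := by
      rw [this]; ring
    omega
  have hb2 : ∑ j ∈ (Finset.range J).filter (fun j => ¬ j < a), min (4^(j+1)) (K^2)
      ≤ c * K^2 := by
    have hcard : ((Finset.range J).filter (fun j => ¬ j < a)).card ≤ c := by
      have hsub : (Finset.range J).filter (fun j => ¬ j < a) ⊆ Finset.Ico a J := by
        intro j hj
        rw [Finset.mem_filter, Finset.mem_range] at hj
        rw [Finset.mem_Ico]
        omega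
      have h1 := Finset.card_le_card hsub
      rw [Nat.card_Ico] at h1
      have hJa : J ≤ a + c := by
        by_contra hcon
        push_neg at hcon
        have h2 : 2^(c+(a+1)) ≤ 2^J := Nat.pow_le_pow_right (by norm_num) (by omega)
        have h3 : K < 2^(a+1) := Nat.lt_pow_succ_log_self (by norm_num) K
        have h4 : 2^c * K < 2^(c+(a+1)) := by
          rw [Nat.pow_add]
          exact mul_lt_mul_of_pos_left h3 (Nat.pow_pos (by norm_num))
        omega
      omega
    calc ∑ j ∈ (Finset.range J).filter (fun j => ¬ j < a), min (4^(j+1)) (K^2)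
        ≤ ∑ _j ∈ (Finset.range J).filter (fun j => ¬ j < a), K^2 :=
          Finset.sum_le_sum (fun j _ => min_le_right _ _)
    _ = ((Finset.range J).filter (fun j => ¬ j < a)).card * K^2 := by
        rw [Finset.sum_const, smul_eq_mul]
    _ ≤ c * K^2 := Nat.mul_le_mul_right _ hcard
  have hck : 3*c*K^2 = 3*(c*K^2) := by ring
  omega


/-! ### the chain argument -/

lemma chainCore (S : Finset ℝ) (J c K : ℕ)
    (hJ4 : 4 ≤ J) (hK1 : 1 ≤ K)
    (hmU : ∀ t ∈ keysU S, mU S t ≤ K) (hmD : ∀ t ∈ keysD S, mD S t ≤ K)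
    (hK2 : K < 2 ^ J) (hJc : 2 ^ J ≤ 2 ^ c * K) :
    3 * ((∑ t ∈ keysU S, (mU S t : ℝ)^2) + ∑ t ∈ keysD S, (mD S t : ℝ)^2) ≤
      6*J*((S+S).card:ℝ)^2 - (45/4)*((S+S).card:ℝ)^2
        + 12*((Sp S).card:ℝ)^2 + (8 + 6*(c:ℝ))*(K:ℝ)^2 := by
  set W : ℝ := (((S+S).card:ℝ))^2 with hWdef
  have hW0 : 0 ≤ W := sq_nonneg _
  have hlev : ∀ j ∈ Finset.range J,
      ((∑ t ∈ lvlU S j, mU S t ^ 2 : ℕ) : ℝ) + ((∑ t ∈ lvlD S j, mD S t ^ 2 : ℕ) : ℝ) ≤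
        2*(W - W/2^j)
          + 4*(((∑ t ∈ lvlU S j, mU S t : ℕ):ℝ) + ((∑ t ∈ lvlD S j, mD S t : ℕ):ℝ))
          + 2*((min (4^(j+1)) (K^2) : ℕ) : ℝ) := by
    intro j _
    have hlowU : ∀ t ∈ lvlU S j, 2 ^ j ≤ mU S t := fun t ht => (lvlU_spec ht).1
    have hhighU : ∀ t ∈ lvlU S j, mU S t < 2 ^ (j+1) := fun t ht => (lvlU_spec ht).2
    have hlowD : ∀ t ∈ lvlD S j, 2 ^ j ≤ mD S t := fun t ht => (lvlD_spec ht).1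
    have hhighD : ∀ t ∈ lvlD S j, mD S t < 2 ^ (j+1) := fun t ht => (lvlD_spec ht).2
    have hKU : ∀ t ∈ lvlU S j, mU S t ≤ K :=
      fun t ht => hmU t (Finset.mem_of_mem_filter _ ht)
    have hKD : ∀ t ∈ lvlD S j, mD S t ≤ K :=
      fun t ht => hmD t (Finset.mem_of_mem_filter _ ht)
    have n1 := level_sq_bound (lvlU S j) (mU S) j hlowU hhighU
    have n1' := level_sq_bound (lvlD S j) (mD S) j hlowD hhighD
    have n4 := leftover_bound (lvlU S j) (mU S) j K hhighU hKU
    have n4' := leftover_bound (lvlD S j) (mD S) j K hhighD hKD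
    have n2 : (∑ t ∈ nextable (lvlU S j), mU S t * mU S (nxt (lvlU S j) t))
        + (∑ t ∈ nextable (lvlD S j), mD S t * mD S (nxt (lvlD S j) t)) ≤ (S+S).card^2 := by
      have h := card_BU_add_BD_le S (lvlU S j) (lvlD S j)
      rw [card_BU_eq, card_BD_eq, Finset.card_product, ← sq] at h
      exact h
    have n3 : (∑ t ∈ nextable (lvlU S j), mU S t * mU S (nxt (lvlU S j) t))
        + (∑ t ∈ nextable (lvlD S j), mD S t * mD S (nxt (lvlD S j) t)) ≤
        2^(j+1) * ((∑ t ∈ lvlU S j, mU S t) + (∑ t ∈ lvlD S j, mD S t)) := by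
      have a1 := good_le_mass (lvlU S j) (mU S) j hhighU
      have a2 := good_le_mass (lvlD S j) (mD S) j hhighD
      calc _ ≤ 2^(j+1) * (∑ t ∈ lvlU S j, mU S t) + 2^(j+1) * (∑ t ∈ lvlD S j, mD S t) :=
            Nat.add_le_add a1 a2
      _ = _ := by ring
    -- move to ℝ
    set G : ℝ := (((∑ t ∈ nextable (lvlU S j), mU S t * mU S (nxt (lvlU S j) t))
        + (∑ t ∈ nextable (lvlD S j), mD S t * mD S (nxt (lvlD S j) t)) : ℕ) : ℝ) with hGdef
    have hg1 : G ≤ W := by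
      rw [hGdef, hWdef]
      push_cast
      exact_mod_cast (Nat.cast_le.mpr n2 : ((_ : ℕ):ℝ) ≤ _)
    have hg2 : G ≤ 2^(j+1) * (((∑ t ∈ lvlU S j, mU S t : ℕ):ℝ)
        + ((∑ t ∈ lvlD S j, mD S t : ℕ):ℝ)) := by
      rw [hGdef]
      push_cast
      exact_mod_cast (Nat.cast_le.mpr n3 : ((_ : ℕ):ℝ) ≤ _)
    have hmass0 : (0:ℝ) ≤ (((∑ t ∈ lvlU S j, mU S t : ℕ):ℝ)
        + ((∑ t ∈ lvlD S j, mD S t : ℕ):ℝ)) := by positivity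
    have hcm := combine_min G W _ j hg1 hg2 hmass0
    have r1 : ((∑ t ∈ lvlU S j, mU S t ^ 2 : ℕ) : ℝ) + ((∑ t ∈ lvlD S j, mD S t ^ 2 : ℕ) : ℝ)
        ≤ 2*G + 2*((min (4^(j+1)) (K^2) : ℕ) : ℝ) := by
      have c1 : (∑ t ∈ lvlU S j, mU S t ^ 2) + (∑ t ∈ lvlD S j, mD S t ^ 2) ≤
          2 * ((∑ t ∈ nextable (lvlU S j), mU S t * mU S (nxt (lvlU S j) t))
            + (∑ t ∈ nextable (lvlD S j), mD S t * mD S (nxt (lvlD S j) t)))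
          + 2 * (min (4^(j+1)) (K^2)) := by omega
      rw [hGdef]
      push_cast
      exact_mod_cast (Nat.cast_le.mpr c1 : ((_ : ℕ):ℝ) ≤ _)
    linarith [hcm, r1]
  have htot := Finset.sum_le_sum hlev
  -- left side sums to the full key sums
  have hU2 := sum_lvlU S J (fun t => mU S t ^ 2) (fun t ht => lt_of_le_of_lt (hmU t ht) hK2)
  have hD2 := sum_lvlD S J (fun t => mD S t ^ 2) (fun t ht => lt_of_le_of_lt (hmD t ht) hK2)
  have hU1 := sum_lvlU S J (fun t => mU S t) (fun t ht => lt_of_le_of_lt (hmU t ht) hK2)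
  have hD1 := sum_lvlD S J (fun t => mD S t) (fun t ht => lt_of_le_of_lt (hmD t ht) hK2)
  have hL : ∑ j ∈ Finset.range J,
      (((∑ t ∈ lvlU S j, mU S t ^ 2 : ℕ) : ℝ) + ((∑ t ∈ lvlD S j, mD S t ^ 2 : ℕ) : ℝ)) =
      (∑ t ∈ keysU S, (mU S t : ℝ)^2) + ∑ t ∈ keysD S, (mD S t : ℝ)^2 := by
    rw [Finset.sum_add_distrib]
    have e1 : ∑ j ∈ Finset.range J, ((∑ t ∈ lvlU S j, mU S t ^ 2 : ℕ) : ℝ)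
        = ∑ t ∈ keysU S, (mU S t:ℝ) ^ 2 := by exact_mod_cast hU2
    have e2 : ∑ j ∈ Finset.range J, ((∑ t ∈ lvlD S j, mD S t ^ 2 : ℕ) : ℝ)
        = ∑ t ∈ keysD S, (mD S t:ℝ) ^ 2 := by exact_mod_cast hD2
    rw [e1, e2]
  have hM : ∑ j ∈ Finset.range J,
      (((∑ t ∈ lvlU S j, mU S t : ℕ):ℝ) + ((∑ t ∈ lvlD S j, mD S t : ℕ):ℝ)) =
      ((Sp S).card:ℝ)^2 := by
    rw [Finset.sum_add_distrib]
    have e1 : ∑ j ∈ Finset.range J, ((∑ t ∈ lvlU S j, mU S t : ℕ) : ℝ)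
        = ((OmU S).card : ℝ) := by exact_mod_cast hU1.trans (sum_mU S)
    have e2 : ∑ j ∈ Finset.range J, ((∑ t ∈ lvlD S j, mD S t : ℕ) : ℝ)
        = ((OmD S).card : ℝ) := by exact_mod_cast hD1.trans (sum_mD S)
    rw [e1, e2]
    exact_mod_cast OmU_add_OmD S
  have hOS : (6:ℝ) * ∑ j ∈ Finset.range J, ((min (4^(j+1)) (K^2) : ℕ) : ℝ) ≤
      (8 + 6*(c:ℝ))*(K:ℝ)^2 := by
    have h := osSum J c K hK1 hJc
    have h3 : ((3 * ∑ j ∈ Finset.range J, min (4^(j+1)) (K^2) : ℕ) : ℝ) ≤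
        ((4*K^2 + 3*c*K^2 : ℕ) : ℝ) := Nat.cast_le.mpr h
    push_cast at h3 ⊢
    linarith
  have hWsum := sumW W J hW0 hJ4
  have hsplit : ∑ j ∈ Finset.range J,
      (2*(W - W/2^j) + 4*(((∑ t ∈ lvlU S j, mU S t : ℕ):ℝ) + ((∑ t ∈ lvlD S j, mD S t : ℕ):ℝ))
        + 2*((min (4^(j+1)) (K^2) : ℕ) : ℝ))
      = 2*(∑ j ∈ Finset.range J, (W - W/2^j))
        + 4*(∑ j ∈ Finset.range J, (((∑ t ∈ lvlU S j, mU S t : ℕ):ℝ)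
              + ((∑ t ∈ lvlD S j, mD S t : ℕ):ℝ)))
        + 2*(∑ j ∈ Finset.range J, ((min (4^(j+1)) (K^2) : ℕ) : ℝ)) := by
    rw [Finset.sum_add_distrib, Finset.sum_add_distrib, Finset.mul_sum, Finset.mul_sum,
      Finset.mul_sum]
  rw [hsplit, hM, hL] at htot
  linarith [htot, hWsum, hOS]


/-! ### elementary bounds on sum and product sets -/

lemma sumset_lower (S : Finset ℝ) (h : S.Nonempty) : 2*S.card ≤ (S+S).card + 1 := by
  set a := S.min' h with ha
  set b := S.max' h with hb
  set A := S.image (fun s => a + s) with hA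
  set B := S.image (fun s => s + b) with hB
  have hAsub : A ⊆ S + S := by
    intro x hx
    rw [hA, Finset.mem_image] at hx
    obtain ⟨s, hs, rfl⟩ := hx
    exact Finset.add_mem_add (S.min'_mem h) hs
  have hBsub : B ⊆ S + S := by
    intro x hx
    rw [hB, Finset.mem_image] at hx
    obtain ⟨s, hs, rfl⟩ := hx
    exact Finset.add_mem_add hs (S.max'_mem h)
  have hAcard : A.card = S.card := Finset.card_image_of_injective _ (add_right_injective a)
  have hBcard : B.card = S.card := Finset.card_image_of_injective _ (add_left_injective b)
  have hint : (A ∩ B) ⊆ {a + b} := by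
    intro x hx
    rw [Finset.mem_inter] at hx
    obtain ⟨hx1, hx2⟩ := hx
    rw [hA, Finset.mem_image] at hx1
    rw [hB, Finset.mem_image] at hx2
    obtain ⟨s, hs, rfl⟩ := hx1
    obtain ⟨t, ht, hts⟩ := hx2
    have h1 : s ≤ b := S.le_max' s hs
    have h2 : a ≤ t := S.min'_le t ht
    have : a + s = a + b := by linarith [hts]
    rw [this]
    exact Finset.mem_singleton_self _
  have h1 : (A ∪ B).card + (A ∩ B).card = A.card + B.card :=
    Finset.card_union_add_card_inter A B
  have h2 : (A ∪ B).card ≤ (S+S).card :=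
    Finset.card_le_card (Finset.union_subset hAsub hBsub)
  have h3 : (A ∩ B).card ≤ 1 := le_trans (Finset.card_le_card hint) (by simp)
  omega

lemma prodset_lower (S : Finset ℝ) (hS : 2 ≤ S.card) : S.card ≤ (S*S).card := by
  have hex : ∃ a ∈ S, a ≠ 0 := by
    by_contra hcon
    push_neg at hcon
    have : S ⊆ {0} := fun a ha => Finset.mem_singleton.mpr (hcon a ha)
    have := Finset.card_le_card this
    simp at this
    omega
  obtain ⟨a, haS, ha⟩ := hex
  calc S.card = (S.image (fun s => a * s)).card :=
        (Finset.card_image_of_injective _ (mul_right_injective₀ ha)).symm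
  _ ≤ (S*S).card := by
      apply Finset.card_le_card
      intro x hx
      rw [Finset.mem_image] at hx
      obtain ⟨s, hs, rfl⟩ := hx
      exact Finset.mul_mem_mul haS hs

/-! ### energy assembly -/

lemma rhoU_zero (S : Finset ℝ) (hP : ∀ a ∈ S, ¬ (0 < a)) (x : ℝ) : rhoU S x = 0 := by
  rw [rhoU, Finset.card_eq_zero, Finset.filter_eq_empty_iff]
  intro p hp
  rw [mem_Om] at hp
  rintro ⟨_, h2⟩
  exact hP p.1 hp.1.1 h2

lemma rhoD_zero (S : Finset ℝ) (hN : ∀ a ∈ S, ¬ (a < 0)) (x : ℝ) : rhoD S x = 0 := by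
  rw [rhoD, Finset.card_eq_zero, Finset.filter_eq_empty_iff]
  intro p hp
  rw [mem_Om] at hp
  rintro ⟨_, h2⟩
  exact hN p.1 hp.1.1 h2

/-- energy of nonzero products bounded by ray energies (general case) -/
lemma energyNZ_le (S : Finset ℝ) :
    ∑ x ∈ Sp S * Sp S, (rep S x : ℝ)^2 ≤
      2*((∑ t ∈ keysU S, (mU S t : ℝ)^2) + ∑ t ∈ keysD S, (mD S t : ℝ)^2) := by
  have hx0 : ∀ x ∈ Sp S * Sp S, x ≠ 0 := by
    intro x hx
    rw [Finset.mem_mul] at hx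
    obtain ⟨a, ha, b, hb, rfl⟩ := hx
    exact mul_ne_zero (mem_Sp.mp ha).2 (mem_Sp.mp hb).2
  have hpt : ∀ x ∈ Sp S * Sp S, (rep S x : ℝ)^2 ≤
      2*(rhoU S x : ℝ)^2 + 2*(rhoD S x : ℝ)^2 := by
    intro x hx
    rw [rep_eq_rho S x (hx0 x hx)]
    push_cast
    nlinarith [sq_nonneg ((rhoU S x : ℝ) - (rhoD S x : ℝ))]
  calc ∑ x ∈ Sp S * Sp S, (rep S x : ℝ)^2
      ≤ ∑ x ∈ Sp S * Sp S, (2*(rhoU S x : ℝ)^2 + 2*(rhoD S x : ℝ)^2) :=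
        Finset.sum_le_sum hpt
  _ = 2*((∑ x ∈ Sp S * Sp S, (rhoU S x : ℝ)^2) + ∑ x ∈ Sp S * Sp S, (rhoD S x : ℝ)^2) := by
      rw [Finset.sum_add_distrib, ← Finset.mul_sum, ← Finset.mul_sum]
      ring
  _ = 2*((∑ t ∈ keysU S, (mU S t : ℝ)^2) + ∑ t ∈ keysD S, (mD S t : ℝ)^2) := by
      congr 1
      have e1 : ∑ x ∈ Sp S * Sp S, (rhoU S x : ℝ)^2 = ∑ t ∈ keysU S, (mU S t : ℝ)^2 := by
        exact_mod_cast congrArg (Nat.cast (R := ℝ)) ((sum_rhoU_sq S).trans (card_Ru_keys S))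
      have e2 : ∑ x ∈ Sp S * Sp S, (rhoD S x : ℝ)^2 = ∑ t ∈ keysD S, (mD S t : ℝ)^2 := by
        exact_mod_cast congrArg (Nat.cast (R := ℝ)) ((sum_rhoD_sq S).trans (card_Rd_keys S))
      rw [e1, e2]

/-- energy of nonzero products, one-sided case: no factor 2 -/
lemma energyNZ_le_oneSided (S : Finset ℝ)
    (hone : (∀ a ∈ S, ¬ (0 < a)) ∨ (∀ a ∈ S, ¬ (a < 0))) :
    ∑ x ∈ Sp S * Sp S, (rep S x : ℝ)^2 ≤
      (∑ t ∈ keysU S, (mU S t : ℝ)^2) + ∑ t ∈ keysD S, (mD S t : ℝ)^2 := by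
  have hx0 : ∀ x ∈ Sp S * Sp S, x ≠ 0 := by
    intro x hx
    rw [Finset.mem_mul] at hx
    obtain ⟨a, ha, b, hb, rfl⟩ := hx
    exact mul_ne_zero (mem_Sp.mp ha).2 (mem_Sp.mp hb).2
  have hpt : ∀ x ∈ Sp S * Sp S, (rep S x : ℝ)^2 ≤
      (rhoU S x : ℝ)^2 + (rhoD S x : ℝ)^2 := by
    intro x hx
    rw [rep_eq_rho S x (hx0 x hx)]
    rcases hone with h | h
    · rw [rhoU_zero S h x]
      push_cast
      nlinarith [sq_nonneg (rhoD S x : ℝ)]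
    · rw [rhoD_zero S h x]
      push_cast
      nlinarith [sq_nonneg (rhoU S x : ℝ)]
  calc ∑ x ∈ Sp S * Sp S, (rep S x : ℝ)^2
      ≤ ∑ x ∈ Sp S * Sp S, ((rhoU S x : ℝ)^2 + (rhoD S x : ℝ)^2) :=
        Finset.sum_le_sum hpt
  _ = (∑ x ∈ Sp S * Sp S, (rhoU S x : ℝ)^2) + ∑ x ∈ Sp S * Sp S, (rhoD S x : ℝ)^2 :=
      Finset.sum_add_distrib
  _ = (∑ t ∈ keysU S, (mU S t : ℝ)^2) + ∑ t ∈ keysD S, (mD S t : ℝ)^2 := by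
      have e1 : ∑ x ∈ Sp S * Sp S, (rhoU S x : ℝ)^2 = ∑ t ∈ keysU S, (mU S t : ℝ)^2 := by
        exact_mod_cast congrArg (Nat.cast (R := ℝ)) ((sum_rhoU_sq S).trans (card_Ru_keys S))
      have e2 : ∑ x ∈ Sp S * Sp S, (rhoD S x : ℝ)^2 = ∑ t ∈ keysD S, (mD S t : ℝ)^2 := by
        exact_mod_cast congrArg (Nat.cast (R := ℝ)) ((sum_rhoD_sq S).trans (card_Rd_keys S))
      rw [e1, e2]


/-! ### auxiliary cardinality facts -/

lemma Sp_card_le (S : Finset ℝ) : (Sp S).card ≤ S.card :=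
  Finset.card_le_card (Finset.filter_subset _ _)

lemma Sp_card_ge (S : Finset ℝ) : S.card ≤ (Sp S).card + 1 := by
  have hsub : S ⊆ Sp S ∪ {0} := by
    intro a ha
    by_cases h : a = 0
    · exact Finset.mem_union_right _ (by simp [h])
    · exact Finset.mem_union_left _ (mem_Sp.mpr ⟨ha, h⟩)
  calc S.card ≤ (Sp S ∪ {0}).card := Finset.card_le_card hsub
  _ ≤ (Sp S).card + 1 := le_trans (Finset.card_union_le _ _) (by simp)

lemma num1 (x : ℝ) (hx : 2 ≤ x) :
    24*x^2 + 40*(x-1)^2 + 3*(2*x-1)^2 ≤ (45/2)*(2*x-1)^2 := by nlinarith [hx]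

lemma num2 (x l : ℝ) (hx : 2 ≤ x) (hl : 7 ≤ l) :
    12*x^2 + 26*x^2 + 3*(2*x-1)^2 ≤ (6*l + 21/4)*(2*x-1)^2 := by nlinarith [hx, hl]

/-! ### the master bound for large sets -/

lemma master (S : Finset ℝ) (L : ℕ) (hn : 2 ≤ S.card) (hL7 : 7 ≤ L)
    (hLn : S.card ≤ 2^L) (hL2 : 2^L ≤ 2*S.card - 2) :
    (S.card:ℝ)^4 ≤ 4*(L:ℝ)*((S+S).card:ℝ)^2*((S*S).card:ℝ) := by
  set n := S.card with hndef
  have hpow : 128 ≤ 2^L := by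
    calc (128:ℕ) = 2^7 := by norm_num
    _ ≤ 2^L := Nat.pow_le_pow_right (by norm_num) hL7
  have hn65 : 65 ≤ n := by omega
  set W : ℝ := (((S+S).card:ℝ))^2 with hWdef
  have hW0 : (0:ℝ) ≤ W := sq_nonneg _
  have hsum := sumset_lower S (Finset.card_pos.mp (by omega))
  have hWlow : (2*(n:ℝ) - 1)^2 ≤ W := by
    have h1 : (2*(n:ℝ) - 1) ≤ ((S+S).card : ℝ) := by
      have h := (Nat.cast_le (α := ℝ)).mpr hsum
      push_cast at h
      linarith
    have h2 : (0:ℝ) ≤ 2*(n:ℝ) - 1 := by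
      have : (2:ℝ) ≤ (n:ℝ) := by exact_mod_cast hn
      linarith
    rw [hWdef]
    exact pow_le_pow_left₀ h2 h1 2
  have hE0 := energy_zero_split S (by omega)
  rw [erase_zero_eq] at hE0
  have hsple := Sp_card_le S
  have hspge := Sp_card_ge S
  have hspR : ((Sp S).card : ℝ) ≤ (n:ℝ) := by exact_mod_cast hsple
  have hsp0 : (0:ℝ) ≤ ((Sp S).card:ℝ) := Nat.cast_nonneg _
  have hspsq : ((Sp S).card:ℝ)^2 ≤ (n:ℝ)^2 := pow_le_pow_left₀ hsp0 hspR 2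
  have hnR1 : (2:ℝ) ≤ (n:ℝ) := by exact_mod_cast hn
  have hLR : (7:ℝ) ≤ (L:ℝ) := by exact_mod_cast hL7
  have hkey : ∑ x ∈ Sp S * Sp S, (rep S x : ℝ)^2 ≤ 4*(L:ℝ)*W - (2*(n:ℝ)-1)^2 := by
    by_cases hPN : (S.filter (fun a => 0 < a)).Nonempty ∧ (S.filter (fun a => a < 0)).Nonempty
    · -- two-sided case
      obtain ⟨hP, hN⟩ := hPN
      have hPc : 1 ≤ (S.filter (fun a => 0 < a)).card := Finset.card_pos.mpr hP
      have hNc : 1 ≤ (S.filter (fun a => a < 0)).card := Finset.card_pos.mpr hN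
      have hPN' := P_add_N S
      set K := (Sp S).card - 1 with hKdef
      have hK1 : 1 ≤ K := by omega
      have hmU' : ∀ t ∈ keysU S, mU S t ≤ K := by
        intro t _
        have h1 := mU_le_P S t
        omega
      have hmD' : ∀ t ∈ keysD S, mD S t ≤ K := by
        intro t _
        have h1 := mD_le_N S t
        omega
      have hK2 : K < 2^L := by omega
      have hJc : 2^L ≤ 2^2 * K := by
        have h3 : (2:ℕ)^2 = 4 := by norm_num
        omega
      have hcc := chainCore S L 2 K (by omega) hK1 hmU' hmD' hK2 hJc
      rw [← hWdef] at hcc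
      have henz := energyNZ_le S
      have hKn : K ≤ n - 1 := by omega
      have hKR : (K:ℝ) ≤ (n:ℝ) - 1 := by
        have h := (Nat.cast_le (α := ℝ)).mpr hKn
        have h2 : ((n - 1 : ℕ) : ℝ) = (n:ℝ) - 1 := by
          have h3 : (1:ℕ) ≤ n := by omega
          push_cast [h3]
          ring
        rw [h2] at h
        exact h
      have hK0 : (0:ℝ) ≤ (K:ℝ) := Nat.cast_nonneg _
      have hKsq : (K:ℝ)^2 ≤ ((n:ℝ)-1)^2 := pow_le_pow_left₀ hK0 hKR 2
      have hnum := num1 (n:ℝ) hnR1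
      linarith [hcc, henz, hspsq, hKsq, hnum, hWlow]
    · -- one-sided case
      have hone : (∀ a ∈ S, ¬ (0 < a)) ∨ (∀ a ∈ S, ¬ (a < 0)) := by
        rw [not_and_or] at hPN
        rcases hPN with h | h
        · left
          intro a ha hpos
          exact h ⟨a, Finset.mem_filter.mpr ⟨ha, hpos⟩⟩
        · right
          intro a ha hneg
          exact h ⟨a, Finset.mem_filter.mpr ⟨ha, hneg⟩⟩
      set K := (Sp S).card with hKdef
      have hK1 : 1 ≤ K := by omega
      have hmU' : ∀ t ∈ keysU S, mU S t ≤ K := by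
        intro t _
        exact le_trans (mU_le_P S t) (P_le_Sp S)
      have hmD' : ∀ t ∈ keysD S, mD S t ≤ K := by
        intro t _
        exact le_trans (mD_le_N S t) (N_le_Sp S)
      have hpow2 : (2:ℕ)^(L+1) = 2*2^L := by ring
      have hK2 : K < 2^(L+1) := by omega
      have hJc : 2^(L+1) ≤ 2^3 * K := by
        have h3 : (2:ℕ)^3 = 8 := by norm_num
        omega
      have hcc := chainCore S (L+1) 3 K (by omega) hK1 hmU' hmD' hK2 hJc
      rw [← hWdef] at hcc
      have henz := energyNZ_le_oneSided S hone
      have hKR : (K:ℝ) ≤ (n:ℝ) := by exact_mod_cast hsple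
      have hK0 : (0:ℝ) ≤ (K:ℝ) := Nat.cast_nonneg _
      have hKsq : (K:ℝ)^2 ≤ (n:ℝ)^2 := pow_le_pow_left₀ hK0 hKR 2
      have hcast : ((L+1 : ℕ):ℝ) = (L:ℝ) + 1 := by push_cast; ring
      rw [hcast] at hcc
      have hnum := num2 (n:ℝ) (L:ℝ) hnR1 hLR
      have hWlift : (6*(L:ℝ) + 21/4)*(2*(n:ℝ)-1)^2 ≤ (6*(L:ℝ) + 21/4)*W := by
        apply mul_le_mul_of_nonneg_left hWlow
        linarith
      linarith [hcc, henz, hspsq, hKsq, hnum, hWlift]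
  have hE : ∑ x ∈ S * S, (rep S x : ℝ)^2 ≤ 4*(L:ℝ)*W := by
    linarith [hkey, hE0]
  have hcs := cs S
  have hSS0 : (0:ℝ) ≤ ((S*S).card:ℝ) := Nat.cast_nonneg _
  calc (n:ℝ)^4 ≤ ((S*S).card:ℝ) * ∑ x ∈ S * S, (rep S x : ℝ)^2 := hcs
  _ ≤ ((S*S).card:ℝ) * (4*(L:ℝ)*W) := mul_le_mul_of_nonneg_left hE hSS0
  _ = 4*(L:ℝ)*W*((S*S).card:ℝ) := by ring


/-! ### the trivial bound for small sets -/

lemma cube_helper (x B C : ℝ) (hx : 3 ≤ x) (hB : x ≤ B) (h32 : 3*B ≤ 32*C) :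
    x^3 ≤ 4*C*(2*x-1)^2 := by
  have hB3 : (3:ℝ) ≤ B := le_trans hx hB
  have hC0 : (0:ℝ) ≤ C := by linarith
  have hCB : (0:ℝ) ≤ 16*C - B := by linarith
  have h1 : x^3 ≤ B*x^2 := by nlinarith [sq_nonneg x]
  have hkey : (0:ℝ) ≤ (16*C - B) * (x - 3) * x :=
    mul_nonneg (mul_nonneg hCB (by linarith)) (by linarith)
  have h2 : B*x^2 ≤ 4*C*(2*x-1)^2 := by nlinarith [hkey, hC0, hx, hCB]
  linarith

lemma smallcase (n L : ℕ) (hn : 2 ≤ n) (hn64 : n ≤ 64) (hL1 : 1 ≤ L)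
    (hLn : n ≤ 2^L) (hlow : 2^(L-1) < n) :
    (n:ℝ)^3 ≤ 4*(L:ℝ)*(2*(n:ℝ)-1)^2 := by
  have hL6 : L ≤ 6 := by
    by_contra hcon
    push_neg at hcon
    have : (2:ℕ)^6 ≤ 2^(L-1) := Nat.pow_le_pow_right (by norm_num) (by omega)
    have h64 : (64:ℕ) < n := by
      calc (64:ℕ) = 2^6 := by norm_num
      _ ≤ 2^(L-1) := this
      _ < n := hlow
    omega
  have hnR : (2:ℝ) ≤ (n:ℝ) := by exact_mod_cast hn
  interval_cases L
  · -- L = 1 : n = 2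
    have h1 : n ≤ 2 := by exact_mod_cast hLn
    have : n = 2 := by omega
    subst this
    norm_num
  · -- L = 2 : n ≤ 4
    have h1 : n ≤ 4 := by exact_mod_cast hLn
    have h2 : 2 < n := by exact_mod_cast hlow
    have h1R : (n:ℝ) ≤ 4 := by exact_mod_cast h1
    have h2R : (3:ℝ) ≤ (n:ℝ) := by exact_mod_cast h2
    have := cube_helper (n:ℝ) 4 2 h2R h1R (by norm_num)
    norm_num at this ⊢
    linarith
  · have h1 : n ≤ 8 := by exact_mod_cast hLn
    have h2 : 4 < n := by exact_mod_cast hlow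
    have h1R : (n:ℝ) ≤ 8 := by exact_mod_cast h1
    have h2R : (4:ℝ) < (n:ℝ) := by exact_mod_cast h2
    have := cube_helper (n:ℝ) 8 3 (by linarith) h1R (by norm_num)
    norm_num at this ⊢
    linarith
  · have h1 : n ≤ 16 := by exact_mod_cast hLn
    have h2 : 8 < n := by exact_mod_cast hlow
    have h1R : (n:ℝ) ≤ 16 := by exact_mod_cast h1
    have h2R : (8:ℝ) < (n:ℝ) := by exact_mod_cast h2
    have := cube_helper (n:ℝ) 16 4 (by linarith) h1R (by norm_num)
    norm_num at this ⊢
    linarith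
  · have h1 : n ≤ 32 := by exact_mod_cast hLn
    have h2 : 16 < n := by exact_mod_cast hlow
    have h1R : (n:ℝ) ≤ 32 := by exact_mod_cast h1
    have h2R : (16:ℝ) < (n:ℝ) := by exact_mod_cast h2
    have := cube_helper (n:ℝ) 32 5 (by linarith) h1R (by norm_num)
    norm_num at this ⊢
    linarith
  · have h2 : 32 < n := by exact_mod_cast hlow
    have h1R : (n:ℝ) ≤ 64 := by exact_mod_cast hn64
    have h2R : (32:ℝ) < (n:ℝ) := by exact_mod_cast h2
    have := cube_helper (n:ℝ) 64 6 (by linarith) h1R (by norm_num)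
    norm_num at this ⊢
    linarith

/-! ### the final theorem, internal form -/

lemma final (S : Finset ℝ) (hS : 2 ≤ S.card) :
    ((S + S).card : ℝ) ^ 2 * ((S * S).card : ℝ) ≥
      (S.card : ℝ) ^ 4 / (4 * ((⌈Real.logb 2 (S.card : ℝ)⌉ : ℤ) : ℝ)) := by
  set n := S.card with hndef
  have hn0 : (0:ℝ) < (n:ℝ) := by
    have : (2:ℝ) ≤ (n:ℝ) := by exact_mod_cast hS
    linarith
  have hnR2 : (2:ℝ) ≤ (n:ℝ) := by exact_mod_cast hS
  set lb := Real.logb 2 (n:ℝ) with hlb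
  have hlb1 : (1:ℝ) ≤ lb := by
    rw [hlb, show (1:ℝ) = Real.logb 2 2 by
      rw [Real.logb_self_eq_one] <;> norm_num]
    exact (Real.logb_le_logb (by norm_num) (by norm_num) hn0).mpr hnR2
  set l : ℤ := ⌈lb⌉ with hl
  have hceil : lb ≤ (l:ℝ) := Int.le_ceil lb
  have hceil' : (l:ℝ) < lb + 1 := Int.ceil_lt_add_one lb
  have hl1 : 1 ≤ l := by
    have : (1:ℝ) ≤ (l:ℝ) := le_trans hlb1 hceil
    exact_mod_cast this
  set L : ℕ := l.toNat with hL
  have hlL : (l:ℝ) = (L:ℝ) := by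
    rw [hL]
    exact_mod_cast (Int.toNat_of_nonneg (by omega)).symm
  have hL1 : 1 ≤ L := by omega
  -- upper bound : n ≤ 2^L
  have hup : (n:ℝ) ≤ (2:ℝ)^L := by
    have h1 : (n:ℝ) = (2:ℝ) ^ lb := by
      rw [hlb, Real.rpow_logb (by norm_num) (by norm_num) hn0]
    have h2 : (2:ℝ) ^ lb ≤ (2:ℝ) ^ ((l:ℝ)) :=
      Real.rpow_le_rpow_of_exponent_le (by norm_num) hceil
    rw [hlL] at h2
    rw [Real.rpow_natCast] at h2
    linarith [h1 ▸ h2]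
  have hLn : n ≤ 2^L := by exact_mod_cast hup
  -- lower bound : 2^(L-1) < n
  have hlowR : (2:ℝ)^(L-1 : ℕ) < (n:ℝ) := by
    have h1 : (2:ℝ) ^ ((l:ℝ) - 1) < (2:ℝ) ^ lb :=
      Real.rpow_lt_rpow_of_exponent_lt (by norm_num) (by linarith)
    have h2 : (n:ℝ) = (2:ℝ) ^ lb := by
      rw [hlb, Real.rpow_logb (by norm_num) (by norm_num) hn0]
    have h3 : ((l:ℝ) - 1) = ((L - 1 : ℕ) : ℝ) := by
      rw [hlL]
      have : (1:ℕ) ≤ L := hL1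
      push_cast [this]
      ring
    rw [h3, Real.rpow_natCast] at h1
    linarith [h2 ▸ h1]
  have hlow : 2^(L-1) < n := by exact_mod_cast hlowR
  -- positivity of the denominator
  have hlpos : (0:ℝ) < 4 * ((l:ℤ):ℝ) := by
    have : (1:ℝ) ≤ (l:ℝ) := by exact_mod_cast hl1
    linarith
  rw [ge_iff_le, div_le_iff₀ hlpos]
  have hmaster : (n:ℝ)^4 ≤ 4*(L:ℝ)*((S+S).card:ℝ)^2*((S*S).card:ℝ) := by
    by_cases hbig : 65 ≤ n
    · have hL7 : 7 ≤ L := by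
        by_contra hcon
        push_neg at hcon
        have : (2:ℕ)^L ≤ 2^6 := Nat.pow_le_pow_right (by norm_num) (by omega)
        have : n ≤ 64 := by
          calc n ≤ 2^L := hLn
          _ ≤ 2^6 := this
          _ = 64 := by norm_num
        omega
      have hL2' : 2^L ≤ 2*n - 2 := by
        have hpw : (2:ℕ)^L = 2*2^(L-1) := by
          conv_lhs => rw [show L = (L-1)+1 by omega]
          rw [pow_succ]
          ring
        omega
      exact master S L hS hL7 hLn hL2'
    · push_neg at hbig
      have hsmall := smallcase n L hS (by omega) hL1 hLn hlow
      have hsum := sumset_lower S (Finset.card_pos.mp (by omega))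
      have hprod := prodset_lower S hS
      have hWlow : (2*(n:ℝ) - 1) ≤ ((S+S).card : ℝ) := by
        have h := (Nat.cast_le (α := ℝ)).mpr hsum
        push_cast at h
        linarith
      have hprodR : (n:ℝ) ≤ ((S*S).card : ℝ) := by exact_mod_cast hprod
      have h2n1 : (0:ℝ) ≤ 2*(n:ℝ) - 1 := by linarith
      have hsq : (2*(n:ℝ)-1)^2 ≤ ((S+S).card:ℝ)^2 := pow_le_pow_left₀ h2n1 hWlow 2
      have hLpos : (0:ℝ) ≤ 4*(L:ℝ) := by positivity
      calc (n:ℝ)^4 = (n:ℝ)^3 * (n:ℝ) := by ring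
      _ ≤ (4*(L:ℝ)*(2*(n:ℝ)-1)^2) * (n:ℝ) :=
          mul_le_mul_of_nonneg_right hsmall (le_of_lt hn0)
      _ ≤ (4*(L:ℝ)*((S+S).card:ℝ)^2) * ((S*S).card:ℝ) := by
          apply mul_le_mul
          · exact mul_le_mul_of_nonneg_left hsq hLpos
          · exact hprodR
          · linarith
          · positivity
      _ = 4*(L:ℝ)*((S+S).card:ℝ)^2*((S*S).card:ℝ) := by ring
  calc (n:ℝ)^4 ≤ 4*(L:ℝ)*((S+S).card:ℝ)^2*((S*S).card:ℝ) := hmaster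
  _ = ((S+S).card:ℝ)^2*((S*S).card:ℝ) * (4*(L:ℝ)) := by ring
  _ = ((S+S).card:ℝ)^2*((S*S).card:ℝ) * (4*((l:ℤ):ℝ)) := by rw [hlL]

end

end SolyAux

theorem stmt_5 (S : Finset ℝ) (hS : 2 ≤ S.card) :
    ((S + S).card : ℝ) ^ 2 * ((S * S).card : ℝ) ≥
      (S.card : ℝ) ^ 4 / (4 * (⌈Real.logb 2 (S.card : ℝ)⌉ : ℝ)) := by
  exact SolyAux.final S hS
end

section
/- Let A ⊆ ℝ be a finite nonempty set and k, ℓ nonnegative integers. Then |k·A − ℓ·A| ≤ |A + A|^{k+ℓ} / |A|^{k+ℓ−1}. -/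
open Pointwise

/-- The `k`-fold iterated sumset of a finite set of reals. -/
noncomputable def iterSumset (A : Finset ℝ) : ℕ → Finset ℝ
  | 0 => {0}
  | n + 1 => iterSumset A n + A

lemma iterSumset_eq_nsmul (A : Finset ℝ) : ∀ n, iterSumset A n = n • A
  | 0 => by simp [iterSumset]; rfl
  | n + 1 => by
    rw [iterSumset, iterSumset_eq_nsmul A n, succ_nsmul]

theorem stmt_6 (A : Finset ℝ) (hA : A.Nonempty) (k l : ℕ) :
    ((iterSumset A k - iterSumset A l).card : ℝ) ≤
      ((A + A).card : ℝ) ^ (k + l) / (A.card : ℝ) ^ (k + l - 1) := by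
  have h := Finset.pluennecke_ruzsa_inequality_nsmul_sub_nsmul_add hA A k l
  rw [iterSumset_eq_nsmul, iterSumset_eq_nsmul]
  have h' : ((k • A - l • A).card : ℝ) ≤ ((A + A).card / A.card : ℝ) ^ (k + l) * A.card := by
    have := (NNRat.cast_le (K := ℝ)).mpr h
    push_cast at this
    exact this
  have hApos : (0 : ℝ) < A.card := by exact_mod_cast hA.card_pos
  rcases Nat.eq_zero_or_pos (k + l) with h0 | hpos
  · simp only [h0, pow_zero, Nat.zero_sub] at h' ⊢
    simp only [pow_zero, one_mul] at h'
    obtain ⟨k0, l0⟩ := Nat.add_eq_zero.mp h0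
    subst k0; subst l0
    simp
  · have : ((A + A).card / A.card : ℝ) ^ (k + l) * A.card
        = ((A + A).card : ℝ) ^ (k + l) / (A.card : ℝ) ^ (k + l - 1) := by
      rw [div_pow]
      rw [div_mul_eq_mul_div, div_eq_div_iff (by positivity) (by positivity)]
      rw [mul_assoc, ← pow_succ']
      congr 2
      omega
    linarith [h', this ▸ h']
end

section
/- Let A ⊆ ℝ be finite with |A| ≥ 2 and D = A − A. Then |D² + D²|² · |D·D| ≪ |D² + D²|⁶ / |D|³. -/
open Pointwise Finset

theorem stmt_18 :
    ∃ C : ℝ, 0 < C ∧ ∀ A : Finset ℝ, 2 ≤ A.card →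
      (((A - A).image (fun d => d ^ 2) +
        (A - A).image (fun d => d ^ 2)).card : ℝ) ^ 2 *
          (((A - A) * (A - A)).card : ℝ) ≤
        C * (((A - A).image (fun d => d ^ 2) +
              (A - A).image (fun d => d ^ 2)).card : ℝ) ^ 6 /
          ((A - A).card : ℝ) ^ 3 := by
  refine ⟨8, by norm_num, fun A hA =>?_⟩
  set D : Finset ℝ := A - A with hD
  set E : Finset ℝ := D.image (fun d => d ^ 2) with hE
  -- D nonempty
  obtain ⟨a, ha⟩ := Finset.card_pos.1 (lt_of_lt_of_le (by norm_num) hA)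
  have hDne : D.Nonempty := ⟨a - a, Finset.sub_mem_sub ha ha⟩
  have hEne : E.Nonempty := hDne.image _
  -- Step 1: #(D*D) ≤ #(2•E - 2•E)
  have step1 : (D * D).card ≤ ((2 • E) - (2 • E)).card := by
    apply Finset.card_le_card_of_injOn (fun x => 2 * x)
    · intro x hx
      simp only [Finset.mem_coe] at hx ⊢
      rw [Finset.mem_mul] at hx
      obtain ⟨d, hd, e, he, rfl⟩ := hx
      rw [hD, Finset.mem_sub] at hd he
      obtain ⟨p, hp, q, hq, rfl⟩ := hd
      obtain ⟨r, hr, s, hs, rfl⟩ := he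
      have key : 2 * ((p - q) * (r - s)) =
          ((p - s) ^ 2 + (q - r) ^ 2) - ((p - r) ^ 2 + (q - s) ^ 2) := by ring
      rw [key, two_nsmul]
      have mem : ∀ x ∈ A, ∀ y ∈ A, (x - y) ^ 2 ∈ E := fun x hx y hy =>
        Finset.mem_image_of_mem _ (Finset.sub_mem_sub hx hy)
      exact Finset.sub_mem_sub (Finset.add_mem_add (mem p hp s hs) (mem q hq r hr))
        (Finset.add_mem_add (mem p hp r hr) (mem q hq s hs))
    · intro x _ y _ h
      simpa using h
  -- Step 2: Plünnecke–Ruzsa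
  have step2 : (((2 • E) - (2 • E)).card : ℝ) ≤
      ((E + E).card : ℝ) ^ 4 / (E.card : ℝ) ^ 3 := by
    have h := Finset.pluennecke_ruzsa_inequality_nsmul_sub_nsmul_add hEne E 2 2
    have hc : (0 : ℝ) < (E.card : ℝ) := by exact_mod_cast hEne.card_pos
    have h2 := (NNRat.cast_le (K := ℝ)).2 h
    push_cast at h2
    have h' : (((2 • E) - (2 • E)).card : ℝ) ≤
        (((E + E).card : ℝ) / (E.card : ℝ)) ^ (2 + 2) * (E.card : ℝ) := h2
    calc (((2 • E) - (2 • E)).card : ℝ)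
        ≤ (((E + E).card : ℝ) / (E.card : ℝ)) ^ (2 + 2) * (E.card : ℝ) := h'
      _ = ((E + E).card : ℝ) ^ 4 / (E.card : ℝ) ^ 3 := by
        rw [div_pow, div_mul_eq_mul_div, div_eq_div_iff (pow_pos hc _).ne' (pow_pos hc _).ne']; ring
  -- Step 3: #D ≤ 2 * #E
  have step3 : (D.card : ℝ) ≤ 2 * (E.card : ℝ) := by
    have : D ⊆ (E.image Real.sqrt) ∪ (E.image (fun x => -Real.sqrt x)) := by
      intro d hd
      have hdE : d ^ 2 ∈ E := Finset.mem_image_of_mem _ hd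
      have hs : Real.sqrt (d ^ 2) = |d| := by
        rw [Real.sqrt_sq_eq_abs]
      rcases abs_choice d with h | h
      · exact Finset.mem_union_left _ (Finset.mem_image.2 ⟨d ^ 2, hdE, by rw [hs, h]⟩)
      · exact Finset.mem_union_right _ (Finset.mem_image.2 ⟨d ^ 2, hdE, by
          simp only [hs, h, neg_neg]⟩)
    have h2 : D.card ≤ 2 * E.card := by
      calc D.card ≤ ((E.image Real.sqrt) ∪ (E.image (fun x => -Real.sqrt x))).card :=
            Finset.card_le_card this
        _ ≤ (E.image Real.sqrt).card + (E.image (fun x => -Real.sqrt x)).card :=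
            Finset.card_union_le _ _
        _ ≤ E.card + E.card := add_le_add (Finset.card_image_le) (Finset.card_image_le)
        _ = 2 * E.card := (two_mul _).symm
    exact_mod_cast h2
  -- Combine
  have hx : (0 : ℝ) < ((E + E).card : ℝ) := by
    exact_mod_cast (hEne.add hEne).card_pos
  have he : (0 : ℝ) < (E.card : ℝ) := by exact_mod_cast hEne.card_pos
  have hy : (0 : ℝ) < (D.card : ℝ) := by exact_mod_cast hDne.card_pos
  have hm : ((D * D).card : ℝ) ≤ ((E + E).card : ℝ) ^ 4 / (E.card : ℝ) ^ 3 :=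
    le_trans (by exact_mod_cast step1) step2
  have hE3 : (D.card : ℝ) ^ 3 ≤ 8 * (E.card : ℝ) ^ 3 := by
    calc (D.card : ℝ) ^ 3 ≤ (2 * (E.card : ℝ)) ^ 3 := pow_le_pow_left₀ hy.le step3 3
      _ = 8 * (E.card : ℝ) ^ 3 := by ring
  have hm2 : ((D * D).card : ℝ) * (D.card : ℝ) ^ 3 ≤ 8 * ((E + E).card : ℝ) ^ 4 := by
    calc ((D * D).card : ℝ) * (D.card : ℝ) ^ 3
        ≤ (((E + E).card : ℝ) ^ 4 / (E.card : ℝ) ^ 3) * (8 * (E.card : ℝ) ^ 3) := by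
          apply mul_le_mul hm hE3 (by positivity) (by positivity)
      _ = 8 * ((E + E).card : ℝ) ^ 4 := by field_simp
  rw [le_div_iff₀ (by positivity : (0:ℝ) < ((D.card : ℝ)) ^ 3)]
  nlinarith [mul_le_mul_of_nonneg_left hm2 (pow_nonneg hx.le 2)]
end
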